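/- arXiv:2509.08680 — 2 statements merged into one kernel-verified Lean document; each statement's English description precedes it below -/
import Mathlib

section
/- Let M be an r-uniform hypergraph that is a disjoint union of Sidorenko r-graphs S₁,…,S_ℓ, and let M' be a disjoint union of some subcollection of {S₁,…,S_ℓ}. Then for every n-vertex r-graph H with hom(M − V(M'), H) > 0, one has hom(M,H) / hom(M − V(M'), H) ≥ t_{K_r^{(r)}}(H)^{d_M(V(M'))} · n^{v(M')}. -/
open Finset

/-- An `r`-uniform hypergraph on vertex type `V`: a set of edges, each an `r`-element
subset of `V`. -/
structure HGraph (r : ℕ) (V : Type) where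
  edges : Finset (Finset V)
  uniform : ∀ e ∈ edges, e.card = r

variable {r : ℕ} {α β γ : Type}

/-- The set of homomorphisms from `F` to `H`: maps sending every edge of `F` to an edge of `H`. -/
def homFinset [Fintype α] [DecidableEq α] [Fintype β] [DecidableEq β]
    (F : HGraph r α) (H : HGraph r β) : Finset (α → β) :=
  Finset.univ.filter fun φ => ∀ e ∈ F.edges, e.image φ ∈ H.edges

/-- The number of homomorphisms from `F` to `H`. -/
def homCount [Fintype α] [DecidableEq α] [Fintype β] [DecidableEq β]
    (F : HGraph r α) (H : HGraph r β) : ℕ :=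
  (homFinset F H).card

/-- The homomorphism density `t_F(H) = hom(F,H) / v(H)^{v(F)}`. -/
noncomputable def homDensity [Fintype α] [DecidableEq α] [Fintype β] [DecidableEq β]
    (F : HGraph r α) (H : HGraph r β) : ℝ :=
  (homCount F H : ℝ) / (Fintype.card β : ℝ) ^ (Fintype.card α)

/-- `K_r^{(r)}`: the `r`-graph consisting of a single edge on `r` vertices. -/
def KEdge (r : ℕ) : HGraph r (Fin r) :=
  ⟨{Finset.univ}, by intro e he; rw [Finset.mem_singleton] at he; subst he; simp⟩

/-- Edge density of an `r`-graph, `t_{K_r^{(r)}}(H)`. -/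
noncomputable def edgeDensity [Fintype β] [DecidableEq β] (H : HGraph r β) : ℝ :=
  homDensity (KEdge r) H

/-- An `r`-graph `F` is Sidorenko if `t_F(H) ≥ t_{K_r^{(r)}}(H)^{e(F)}` for all `r`-graphs `H`. -/
def IsSidorenko [Fintype α] [DecidableEq α] (F : HGraph r α) : Prop :=
  ∀ (β : Type) [Fintype β] [DecidableEq β] (H : HGraph r β),
    homDensity F H ≥ edgeDensity H ^ F.edges.card

/-- The Sidorenko exponent
`s(F) = sup {s ≥ 0 : ∃ r-graph H with t_F(H) = t_{K_r^{(r)}}(H)^s > 0}`. -/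
noncomputable def sidorenkoExp [Fintype α] [DecidableEq α] (F : HGraph r α) : ℝ :=
  sSup {s : ℝ | 0 ≤ s ∧ ∃ (n : ℕ) (H : HGraph r (Fin n)),
    homDensity F H = edgeDensity H ^ s ∧ 0 < edgeDensity H ^ s}

/-- `d_M(U)`: the number of edges of `M` containing at least one vertex of `U`. -/
def degNear [DecidableEq α] (M : HGraph r α) (U : Finset α) : ℕ :=
  (M.edges.filter fun e => ∃ v ∈ U, v ∈ e).card

/-- The set of vertices appearing in some edge of a given edge set. -/
def edgeSupport [DecidableEq α] (Es : Finset (Finset α)) : Finset α :=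
  Es.biUnion id
variable {ι : Type} [DecidableEq ι] {A : ι → Type} [∀ i, DecidableEq (A i)]

/-- The edges of the disjoint union of the hypergraphs `S i` for `i` ranging over a
finite index set `B`. -/
def sigmaEdges (S : ∀ i, HGraph r (A i)) (B : Finset ι) :
    Finset (Finset (Σ i, A i)) :=
  B.biUnion fun i => (S i).edges.image (Finset.image (Sigma.mk i))

lemma sigmaEdges_card (S : ∀ i, HGraph r (A i)) (B : Finset ι) :
    ∀ f ∈ sigmaEdges S B, f.card = r := by
  intro f hf
  simp only [sigmaEdges, Finset.mem_biUnion, Finset.mem_image] at hf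
  obtain ⟨i, -, g, hg, rfl⟩ := hf
  rw [Finset.card_image_of_injective _ sigma_mk_injective]
  exact (S i).uniform g hg

/-- The disjoint union of the hypergraphs `S i`. -/
def sigmaHG [Fintype ι] (S : ∀ i, HGraph r (A i)) : HGraph r (Σ i, A i) :=
  ⟨sigmaEdges S Finset.univ, sigmaEdges_card S Finset.univ⟩

/-- The disjoint union of the sub-collection `{S i : i ∈ B}`, on its own vertex set. -/
def sigmaRestrict [Fintype ι] (S : ∀ i, HGraph r (A i)) (B : Finset ι) :
    HGraph r (Σ i : {j // j ∈ B}, A i.1) :=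
  sigmaHG (fun i : {j // j ∈ B} => S i.1)

/-- The vertex set of the disjoint union of `{S i : i ∈ B}`, viewed inside `Σ i, A i`. -/
def sigmaVerts [∀ i, Fintype (A i)] (B : Finset ι) : Finset (Σ i, A i) :=
  B.biUnion fun i => (Finset.univ : Finset (A i)).image (Sigma.mk i)


lemma edgeDensity_nonneg [Fintype β] [DecidableEq β] (H : HGraph r β) :
    0 ≤ edgeDensity H :=
  div_nonneg (Nat.cast_nonneg _) (by positivity)

lemma homCount_ge [Fintype α] [DecidableEq α] [Fintype β] [DecidableEq β]
    {F : HGraph r α} (hF : IsSidorenko F) (H : HGraph r β) :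
    edgeDensity H ^ F.edges.card * (Fintype.card β : ℝ) ^ (Fintype.card α) ≤
      (homCount F H : ℝ) := by
  have h := hF β H
  rw [homDensity] at h
  set c : ℝ := (Fintype.card β : ℝ) ^ (Fintype.card α) with hc
  have hc0 : 0 ≤ c := by positivity
  rcases hc0.eq_or_lt with h0 | h0
  · rw [← h0, mul_zero]; exact Nat.cast_nonneg _
  · rw [← le_div_iff₀ h0]; exact h

lemma mem_homFinset_sigma {ι : Type} [Fintype ι] [DecidableEq ι] {A : ι → Type}
    [∀ i, Fintype (A i)] [∀ i, DecidableEq (A i)]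
    (S : ∀ i, HGraph r (A i)) [Fintype β] [DecidableEq β] (H : HGraph r β)
    (φ : (Σ i, A i) → β) :
    φ ∈ homFinset (sigmaHG S) H ↔ ∀ i, (fun a => φ ⟨i, a⟩) ∈ homFinset (S i) H := by
  simp only [homFinset, Finset.mem_filter, Finset.mem_univ, true_and, sigmaHG,
    sigmaEdges, Finset.mem_biUnion, Finset.mem_image]
  constructor
  · intro h i e he
    have := h _ ⟨i, e, he, rfl⟩
    rwa [Finset.image_image] at this
  · rintro h f ⟨i, e, he, rfl⟩
    rw [Finset.image_image]
    exact h i e he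

lemma homCount_sigma {ι : Type} [Fintype ι] [DecidableEq ι] {A : ι → Type}
    [∀ i, Fintype (A i)] [∀ i, DecidableEq (A i)]
    (S : ∀ i, HGraph r (A i)) [Fintype β] [DecidableEq β] (H : HGraph r β) :
    homCount (sigmaHG S) H = ∏ i, homCount (S i) H := by
  classical
  rw [homCount,
    show ∏ i, homCount (S i) H = (Fintype.piFinset fun i => homFinset (S i) H).card from
      (Fintype.card_piFinset _).symm]
  apply Finset.card_nbij' (fun φ i a => φ ⟨i, a⟩) (fun f p => f p.1 p.2)
  · intro φ hφ
    rw [Finset.mem_coe, Fintype.mem_piFinset]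
    exact (mem_homFinset_sigma S H φ).1 hφ
  · intro f hf
    rw [Finset.mem_coe, Fintype.mem_piFinset] at hf
    exact (mem_homFinset_sigma S H _).2 fun i => hf i
  · intro φ _; rfl
  · intro f _; rfl

lemma degNear_sigma (hr : 1 ≤ r) {ι : Type} [Fintype ι] [DecidableEq ι] {A : ι → Type}
    [∀ i, Fintype (A i)] [∀ i, DecidableEq (A i)]
    (S : ∀ i, HGraph r (A i)) (B : Finset ι) :
    degNear (sigmaHG S) (sigmaVerts B) = ∑ i ∈ B, (S i).edges.card := by
  classical
  have hne : ∀ i, ∀ e ∈ (S i).edges, e.Nonempty := fun i e he =>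
    Finset.card_pos.1 (by rw [(S i).uniform e he]; omega)
  have h1 : degNear (sigmaHG S) (sigmaVerts B) = (sigmaEdges S B).card := by
    rw [degNear]
    congr 1
    ext f
    simp only [sigmaHG, sigmaEdges, Finset.mem_filter, Finset.mem_biUnion, Finset.mem_image,
      Finset.mem_univ, true_and]
    constructor
    · rintro ⟨⟨i, e, he, rfl⟩, v, hv, hvf⟩
      refine ⟨i, ?_, e, he, rfl⟩
      simp only [sigmaVerts, Finset.mem_biUnion, Finset.mem_image, Finset.mem_univ,
        true_and] at hv
      obtain ⟨j, hj, a, rfl⟩ := hv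
      simp only [Finset.mem_image] at hvf
      obtain ⟨b, hb, hba⟩ := hvf
      cases hba
      exact hj
    · rintro ⟨i, hi, e, he, rfl⟩
      obtain ⟨a, ha⟩ := hne i e he
      exact ⟨⟨i, e, he, rfl⟩, ⟨i, a⟩,
        by simp only [sigmaVerts, Finset.mem_biUnion, Finset.mem_image, Finset.mem_univ,
            true_and]; exact ⟨i, hi, a, rfl⟩,
        Finset.mem_image_of_mem _ ha⟩
  rw [h1, sigmaEdges, Finset.card_biUnion]
  · exact Finset.sum_congr rfl fun i _ =>
      Finset.card_image_of_injective _ (Finset.image_injective sigma_mk_injective)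
  · intro i hi j hj hij
    simp only [Finset.disjoint_left, Finset.mem_image]
    rintro f ⟨e, he, rfl⟩ ⟨e', he', hf⟩
    obtain ⟨a, ha⟩ := hne j e' he'
    have hmem : (⟨j, a⟩ : Σ i, A i) ∈ e.image (Sigma.mk i) :=
      hf ▸ Finset.mem_image_of_mem _ ha
    simp only [Finset.mem_image] at hmem
    obtain ⟨b, -, hb⟩ := hmem
    exact hij (congrArg Sigma.fst hb)

theorem stmt2 {r : ℕ} (hr : 1 ≤ r) {ι : Type} [Fintype ι] [DecidableEq ι]
    {A : ι → Type} [∀ i, Fintype (A i)] [∀ i, DecidableEq (A i)]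
    (S : ∀ i, HGraph r (A i)) (hS : ∀ i, IsSidorenko (S i))
    (B : Finset ι)
    {β : Type} [Fintype β] [DecidableEq β] (H : HGraph r β)
    (hpos : 0 < homCount (sigmaRestrict S Bᶜ) H) :
    (homCount (sigmaHG S) H : ℝ) / (homCount (sigmaRestrict S Bᶜ) H : ℝ) ≥
      edgeDensity H ^ degNear (sigmaHG S) (sigmaVerts B) *
        (Fintype.card β : ℝ) ^ (∑ i ∈ B, Fintype.card (A i)) := by
  classical
  have hN : homCount (sigmaHG S) H = ∏ i, homCount (S i) H := homCount_sigma S H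
  have hD : homCount (sigmaRestrict S Bᶜ) H = ∏ i ∈ Bᶜ, homCount (S i) H := by
    rw [sigmaRestrict, homCount_sigma]
    exact Finset.prod_coe_sort Bᶜ (fun i => homCount (S i) H)
  have hDpos : (0:ℝ) < (homCount (sigmaRestrict S Bᶜ) H : ℝ) := by exact_mod_cast hpos
  have hsplit : (homCount (sigmaHG S) H : ℝ)
      = (∏ i ∈ B, (homCount (S i) H : ℝ)) * (homCount (sigmaRestrict S Bᶜ) H : ℝ) := by
    rw [hN, hD]
    push_cast
    rw [Finset.prod_mul_prod_compl]
  rw [ge_iff_le, hsplit, mul_div_assoc, div_self hDpos.ne', mul_one,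
    degNear_sigma hr S B]
  calc edgeDensity H ^ (∑ i ∈ B, (S i).edges.card)
        * (Fintype.card β : ℝ) ^ (∑ i ∈ B, Fintype.card (A i))
      = ∏ i ∈ B, (edgeDensity H ^ (S i).edges.card
          * (Fintype.card β : ℝ) ^ (Fintype.card (A i))) := by
        rw [Finset.prod_mul_distrib, Finset.prod_pow_eq_pow_sum, Finset.prod_pow_eq_pow_sum]
    _ ≤ ∏ i ∈ B, (homCount (S i) H : ℝ) :=
        Finset.prod_le_prod
          (fun i _ => mul_nonneg (pow_nonneg (edgeDensity_nonneg H) _) (by positivity))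
          (fun i _ => homCount_ge (hS i) H)
end

section
/- Let r ≥ 2, let M be a dominating (r−1)-graph, and let F be an r-partite r-graph whose link profile (with respect to the r-th part, with vertices v₁,…,v_t) satisfies L_F(v₁) = M and each L_F(v_i) is a sub-hypergraph of M. Then the Sidorenko exponent of F satisfies s(F) ≤ Σ_{i=1}^t d_M(V(L_F(v_i))). -/
open Finset

variable {r : ℕ} {α β γ : Type}

/-- `M` is a dominating hypergraph: for every sub-hypergraph `M'` of `M` with at least
one edge (given by a nonempty subset `E'` of the edges of `M`) and every `r`-graph `H`,
`t_M(H)^{1/e(M)} ≥ t_{M'}(H)^{1/e(M')}`. -/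
def IsDominating [Fintype α] [DecidableEq α] (M : HGraph r α) : Prop :=
  ∀ (E' : Finset (Finset α)) (hsub : E' ⊆ M.edges), E'.Nonempty →
    ∀ (β : Type) [Fintype β] [DecidableEq β] (H : HGraph r β),
      homDensity M H ^ ((M.edges.card : ℝ)⁻¹) ≥
        homDensity (⟨E', fun e he => M.uniform e (hsub he)⟩ : HGraph r α) H ^
          ((E'.card : ℝ)⁻¹)

/-- `M − B`: delete the vertices of `B` from `M` (keeping the edges avoiding `B`). -/
def HGraph.delete [DecidableEq α] (M : HGraph r α) (B : Finset α) :
    HGraph r {x : α // x ∉ B} where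
  edges := (M.edges.filter fun e => ∀ v ∈ e, v ∉ B).image (Finset.subtype fun x => x ∉ B)
  uniform := by
    intro e he
    simp only [Finset.mem_image, Finset.mem_filter] at he
    obtain ⟨f, ⟨hf, hfB⟩, rfl⟩ := he
    rw [Finset.card_subtype, Finset.filter_true_of_mem hfB]
    exact M.uniform f hf
/-- Given `(r-1)`-uniform edge sets `E i` (the prescribed link hypergraphs of the `t`
vertices of the `r`-th part), the `r`-graph on `α ⊕ Fin t` whose link profile is
`(E 0, …, E (t-1))`. -/
def linkCone {k t : ℕ} {α : Type} [DecidableEq α] (E : Fin t → Finset (Finset α))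
    (hE : ∀ i, ∀ f ∈ E i, f.card = k) : HGraph (k + 1) (α ⊕ Fin t) where
  edges := Finset.univ.biUnion fun i : Fin t =>
    (E i).image fun f => insert (Sum.inr i) (f.image Sum.inl)
  uniform := by
    intro e he
    simp only [Finset.mem_biUnion, Finset.mem_image] at he
    obtain ⟨i, -, f, hf, rfl⟩ := he
    rw [Finset.card_insert_of_notMem (by simp),
      Finset.card_image_of_injective _ Sum.inl_injective, hE i f hf]

set_option linter.unusedSectionVars false
namespace Stmt6Aux


/-- Exponential (support-size) form of the Gibbs inequality / weighted AM-GM. -/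
lemma gibbs_exp {ι : Type*} (s : Finset ι) (w t : ι → ℝ)
    (hw0 : ∀ i ∈ s, 0 ≤ w i) (hw1 : ∑ i ∈ s, w i = 1)
    (ht0 : ∀ i ∈ s, 0 ≤ t i) (hts : ∀ i ∈ s, 0 < w i → 0 < t i) :
    Real.exp (∑ i ∈ s, w i * Real.log (t i / w i)) ≤ ∑ i ∈ s, t i := by
  have h1 : Real.exp (∑ i ∈ s, w i * Real.log (t i / w i))
      = ∏ i ∈ s, (t i / w i) ^ (w i) := by
    rw [Real.exp_sum]
    refine Finset.prod_congr rfl fun i hi => ?_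
    rcases eq_or_lt_of_le (hw0 i hi) with h | h
    · rw [← h]; simp
    · rw [Real.rpow_def_of_pos (div_pos (hts i hi h) h), mul_comm]
  rw [h1]
  refine le_trans (Real.geom_mean_le_arith_mean_weighted s w _ hw0 hw1
      (fun i hi => div_nonneg (ht0 i hi) (hw0 i hi))) ?_
  refine Finset.sum_le_sum fun i hi => ?_
  rcases eq_or_lt_of_le (hw0 i hi) with h | h
  · rw [← h, zero_mul]; exact ht0 i hi
  · rw [mul_div_cancel₀ _ (ne_of_gt h)]

/-- Logarithmic form of the Gibbs inequality. -/
lemma gibbs_log {ι : Type*} (s : Finset ι) (w t : ι → ℝ)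
    (hw0 : ∀ i ∈ s, 0 ≤ w i) (hw1 : ∑ i ∈ s, w i = 1)
    (ht0 : ∀ i ∈ s, 0 ≤ t i) (hts : ∀ i ∈ s, 0 < w i → 0 < t i)
    (hS : 0 < ∑ i ∈ s, t i) :
    ∑ i ∈ s, w i * Real.log (t i / w i) ≤ Real.log (∑ i ∈ s, t i) :=
  (Real.le_log_iff_exp_le hS).2 (gibbs_exp s w t hw0 hw1 ht0 hts)

/-- Jensen for `x log x`:  `∑ u log u ≥ S log (S / |s|)`. -/
lemma sum_mul_log_self_ge {ι : Type*} (s : Finset ι) (u : ι → ℝ)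
    (hu : ∀ i ∈ s, 0 ≤ u i) (hS : 0 < ∑ i ∈ s, u i) :
    (∑ i ∈ s, u i) * (Real.log (∑ i ∈ s, u i) - Real.log (s.card)) ≤
      ∑ i ∈ s, u i * Real.log (u i) := by
  have hcard : (0:ℝ) < s.card := by
    rcases s.eq_empty_or_nonempty with rfl | h
    · simp at hS
    · exact_mod_cast Finset.card_pos.2 h
  set S := ∑ i ∈ s, u i with hSdef
  have key : ∑ i ∈ s, (u i / S) * Real.log (1 / (u i / S)) ≤ Real.log (s.card) := by
    have := gibbs_log s (fun i => u i / S) (fun _ => 1)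
      (fun i hi => div_nonneg (hu i hi) hS.le)
      (by rw [← Finset.sum_div, div_self hS.ne'])
      (fun i hi => zero_le_one) (fun i hi _ => zero_lt_one) ?_
    · have h0 : ∑ _i ∈ s, (1:ℝ) = s.card := by simp
      rwa [h0] at this
    · simp [hcard]
  have expand : ∀ i ∈ s, (u i / S) * Real.log (1 / (u i / S))
      = (u i / S) * Real.log S - (u i / S) * Real.log (u i) := by
    intro i hi
    rcases eq_or_lt_of_le (hu i hi) with h | h
    · rw [← h]; simp
    · rw [one_div, Real.log_inv, Real.log_div (ne_of_gt h) hS.ne', neg_sub, mul_sub]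
  rw [Finset.sum_congr rfl expand, Finset.sum_sub_distrib, ← Finset.sum_mul,
    ← Finset.sum_div, ← hSdef, div_self hS.ne', one_mul] at key
  -- key : log S - ∑ (u i / S) * log (u i) ≤ log s.card
  have h2 : S * Real.log S - S * Real.log s.card ≤ S * (∑ i ∈ s, (u i / S) * Real.log (u i)) := by
    nlinarith [key, hS]
  calc S * (Real.log S - Real.log s.card) = S * Real.log S - S * Real.log s.card := by ring
    _ ≤ S * (∑ i ∈ s, (u i / S) * Real.log (u i)) := h2
    _ = ∑ i ∈ s, u i * Real.log (u i) := by
        rw [Finset.mul_sum]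
        refine Finset.sum_congr rfl fun i hi => ?_
        field_simp


section Counting

variable {k : ℕ} {α : Type} [Fintype α] [DecidableEq α] {n : ℕ} (H : HGraph (k+1) (Fin n))

/-- link edges of `H` at a vertex `b`. -/
def lkE (b : Fin n) : Finset (Finset (Fin n)) :=
  (H.edges.filter fun e => b ∈ e).image fun e => e.erase b

lemma card_of_mem_lkE {b : Fin n} {S : Finset (Fin n)} (hS : S ∈ lkE H b) : S.card = k := by
  simp only [lkE, mem_image, mem_filter] at hS
  obtain ⟨e, ⟨he, hbe⟩, rfl⟩ := hS
  rw [Finset.card_erase_of_mem hbe, H.uniform e he]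
  rfl

/-- The link hypergraph of `H` at `b`. -/
def lk (b : Fin n) : HGraph k (Fin n) := ⟨lkE H b, fun _ hS => card_of_mem_lkE H hS⟩

lemma mem_lkE {b : Fin n} {S : Finset (Fin n)} (hS : S.card ≤ k) :
    S ∈ lkE H b ↔ insert b S ∈ H.edges := by
  constructor
  · intro h
    simp only [lkE, mem_image, mem_filter] at h
    obtain ⟨e, ⟨he, hbe⟩, rfl⟩ := h
    rwa [Finset.insert_erase hbe]
  · intro h
    have hb : b ∉ S := by
      intro hbS
      have h1 := H.uniform _ h
      rw [Finset.insert_eq_self.2 hbS] at h1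
      omega
    simp only [lkE, mem_image, mem_filter]
    exact ⟨insert b S, ⟨h, Finset.mem_insert_self b S⟩, by rw [Finset.erase_insert hb]⟩

/-- `φ` is good for `b` w.r.t. edge set `A`. -/
def ok (A : Finset (Finset α)) (b : Fin n) (φ : α → Fin n) : Prop :=
  ∀ f ∈ A, insert b (f.image φ) ∈ H.edges

instance (A : Finset (Finset α)) (b : Fin n) : DecidablePred (ok H A b) :=
  fun _ => Finset.decidableDforallFinset

/-- number of `φ` that are good for `b`. -/
def cnt (A : Finset (Finset α)) (b : Fin n) : ℕ :=
  #(univ.filter fun φ : α → Fin n => ok H A b φ)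

/-- number of `b` that are good for `φ`. -/
def nb (A : Finset (Finset α)) (φ : α → Fin n) : ℕ :=
  #(univ.filter fun b : Fin n => ok H A b φ)

lemma homCount_eq_cnt (A : Finset (Finset α)) (hb : ∀ f ∈ A, f.card = k) (b : Fin n) :
    homCount (⟨A, hb⟩ : HGraph k α) (lk H b) = cnt H A b := by
  unfold homCount homFinset cnt
  congr 1
  refine Finset.filter_congr fun φ _ => ?_
  refine forall₂_congr fun f hf => ?_
  exact mem_lkE H (le_of_le_of_eq (Finset.card_image_le) (hb f hf))

lemma nb_le (A : Finset (Finset α)) (φ : α → Fin n) : nb H A φ ≤ n := by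
  have := Finset.card_filter_le (univ : Finset (Fin n)) (fun b => ok H A b φ)
  simpa [nb] using this

lemma nb_empty (φ : α → Fin n) : nb H ∅ φ = n := by
  unfold nb
  rw [Finset.filter_true_of_mem (by intro b _; intro f hf; simp at hf)]
  simp

lemma cnt_mono {A A' : Finset (Finset α)} (hAA : A' ⊆ A) (b : Fin n) :
    cnt H A b ≤ cnt H A' b := by
  refine Finset.card_le_card (Finset.monotone_filter_right _ ?_)
  intro φ _ hφ f hf
  exact hφ f (hAA hf)

/-- restriction of a map to (the coercion of) a finset. -/
def res (V : Finset α) (φ : α → Fin n) : {x // x ∈ V} → Fin n := fun a => φ a.1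

/-- extension of a partial map by junk. -/
def ext (hn : 0 < n) (V : Finset α) (ψ : {x // x ∈ V} → Fin n) : α → Fin n :=
  fun a => if h : a ∈ V then ψ ⟨a, h⟩ else ⟨0, hn⟩

lemma res_ext (hn : 0 < n) (V : Finset α) (ψ : {x // x ∈ V} → Fin n) :
    res V (ext hn V ψ) = ψ := by
  funext a
  simp [res, ext, a.2]

lemma image_congr_of_res_eq {V : Finset α} {φ φ' : α → Fin n} {f : Finset α}
    (hf : f ⊆ V) (h : res V φ = res V φ') : f.image φ = f.image φ' := by
  refine Finset.image_congr fun x hx => ?_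
  have := congrFun h ⟨x, hf hx⟩
  simpa [res] using this

lemma ok_congr_of_res_eq {A : Finset (Finset α)} (hA : ∀ f ∈ A, f ⊆ V)
    {φ φ' : α → Fin n} {b : Fin n} (h : res V φ = res V φ') :
    ok H A b φ ↔ ok H A b φ' := by
  refine forall₂_congr fun f hf => ?_
  rw [image_congr_of_res_eq (hA f hf) h]

lemma card_res_fiber (V : Finset α) (ψ : {x // x ∈ V} → Fin n) :
    #(univ.filter fun φ : α → Fin n => res V φ = ψ) = n ^ (Fintype.card α - V.card) := by
  classical
  have : #(univ.filter fun φ : α → Fin n => res V φ = ψ)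
      = #(univ : Finset ({x // x ∉ V} → Fin n)) := by
    refine Finset.card_bij' (fun φ _ => fun a => φ a.1)
      (fun χ _ => fun a => if h : a ∈ V then ψ ⟨a, h⟩ else χ ⟨a, h⟩) ?_ ?_ ?_ ?_
    · intro φ hφ; exact Finset.mem_univ _
    · intro χ hχ
      simp only [Finset.mem_filter, Finset.mem_univ, true_and]
      funext a
      simp [res, a.2]
    · intro φ hφ
      simp only [Finset.mem_filter, Finset.mem_univ, true_and] at hφ
      funext a
      by_cases h : a ∈ V
      · simp only [dif_pos h]
        exact (congrFun hφ ⟨a, h⟩).symm ▸ rfl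
      · simp [dif_neg h]
    · intro χ hχ
      funext a
      simp [a.2]
  rw [this, Finset.card_univ, Fintype.card_fun, Fintype.card_fin]
  congr 1
  have h1 : Fintype.card {x // x ∈ V} = V.card := Fintype.card_coe V
  have := Fintype.card_subtype_compl (fun x => x ∈ V)
  rw [this, h1]

/-- number of good `φ` lying over a given partial map `ψ`. -/
def Yc (A : Finset (Finset α)) (b : Fin n) (V : Finset α) (ψ : {x // x ∈ V} → Fin n) : ℕ :=
  #(univ.filter fun φ : α → Fin n => ok H A b φ ∧ res V φ = ψ)

lemma sum_Yc (A : Finset (Finset α)) (b : Fin n) (V : Finset α) :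
    ∑ ψ : {x // x ∈ V} → Fin n, Yc H A b V ψ = cnt H A b := by
  unfold cnt
  rw [Finset.card_eq_sum_card_fiberwise (f := res V) (t := univ) (fun x _ => Finset.mem_univ _)]
  refine Finset.sum_congr rfl fun ψ _ => ?_
  unfold Yc
  rw [Finset.filter_filter]

lemma Yc_mono {A A' : Finset (Finset α)} (hAA : A' ⊆ A) (b : Fin n) (V : Finset α)
    (ψ : {x // x ∈ V} → Fin n) : Yc H A b V ψ ≤ Yc H A' b V ψ := by
  refine Finset.card_le_card (Finset.monotone_filter_right _ ?_)
  intro φ _ hφ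
  exact ⟨fun f hf => hφ.1 f (hAA hf), hφ.2⟩

/-- If all edges of `A` avoid `V`, the fiber count does not depend on `ψ`. -/
lemma Yc_const {A : Finset (Finset α)} {V : Finset α}
    (hA : ∀ f ∈ A, ∀ x ∈ f, x ∉ V) (b : Fin n)
    (ψ ψ' : {x // x ∈ V} → Fin n) : Yc H A b V ψ = Yc H A b V ψ' := by
  unfold Yc
  refine Finset.card_bij' (fun φ _ => fun a => if h : a ∈ V then ψ' ⟨a, h⟩ else φ a)
    (fun φ _ => fun a => if h : a ∈ V then ψ ⟨a, h⟩ else φ a) ?_ ?_ ?_ ?_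
  · intro φ hφ
    simp only [Finset.mem_filter, Finset.mem_univ, true_and] at hφ ⊢
    constructor
    · intro f hf
      have himg : f.image (fun a => if h : a ∈ V then ψ' ⟨a, h⟩ else φ a) = f.image φ :=
        Finset.image_congr fun x hx => by simp [hA f hf x hx]
      rw [himg]; exact hφ.1 f hf
    · funext a; simp [res, a.2]
  · intro φ hφ
    simp only [Finset.mem_filter, Finset.mem_univ, true_and] at hφ ⊢
    constructor
    · intro f hf
      have himg : f.image (fun a => if h : a ∈ V then ψ ⟨a, h⟩ else φ a) = f.image φ :=
        Finset.image_congr fun x hx => by simp [hA f hf x hx]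
      rw [himg]; exact hφ.1 f hf
    · funext a; simp [res, a.2]
  · intro φ hφ
    simp only [Finset.mem_filter, Finset.mem_univ, true_and] at hφ
    funext a
    by_cases h : a ∈ V
    · simp only [dif_pos h]
      have := congrFun hφ.2 ⟨a, h⟩
      simp only [res] at this
      exact this.symm
    · simp [dif_neg h]
  · intro φ hφ
    simp only [Finset.mem_filter, Finset.mem_univ, true_and] at hφ
    funext a
    by_cases h : a ∈ V
    · simp only [dif_pos h]
      have := congrFun hφ.2 ⟨a, h⟩
      simp only [res] at this
      exact this.symm
    · simp [dif_neg h]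

/-- Consequence: the total count factors. -/
lemma Yc_mul {A : Finset (Finset α)} {V : Finset α}
    (hA : ∀ f ∈ A, ∀ x ∈ f, x ∉ V) (b : Fin n) (ψ : {x // x ∈ V} → Fin n) :
    Yc H A b V ψ * n ^ V.card = cnt H A b := by
  have h1 : ∑ ψ' : {x // x ∈ V} → Fin n, Yc H A b V ψ' = cnt H A b := sum_Yc H A b V
  rw [Finset.sum_congr rfl (fun ψ' _ => Yc_const H hA b ψ' ψ)] at h1
  rw [Finset.sum_const] at h1
  rw [← h1, Finset.card_univ, Fintype.card_fun, Fintype.card_fin, Fintype.card_coe,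
    smul_eq_mul, mul_comm]

lemma image_res (V : Finset α) (φ : α → Fin n) :
    Finset.image (res V φ) univ = V.image φ := by
  ext y
  simp only [Finset.mem_image, Finset.mem_univ, true_and, res]
  constructor
  · rintro ⟨a, ha⟩; exact ⟨a.1, a.2, ha⟩
  · rintro ⟨x, hx, hxy⟩; exact ⟨⟨x, hx⟩, hxy⟩

lemma image_univ_equiv' {γ δ : Type} [Fintype γ] [Fintype δ] [DecidableEq δ]
    (e : γ ≃ δ) : Finset.image e univ = univ := by
  ext y
  simp only [Finset.mem_image, Finset.mem_univ, true_and, iff_true]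
  exact ⟨e.symm y, e.apply_symm_apply y⟩

lemma card_filter_comp_equiv {γ δ X : Type} [Fintype γ] [Fintype δ] [DecidableEq γ]
    [DecidableEq δ] [Fintype X] [DecidableEq X] (e : γ ≃ δ)
    (P : Finset X → Prop) [DecidablePred P] :
    #(univ.filter fun ψ : γ → X => P (Finset.image ψ univ))
      = #(univ.filter fun g : δ → X => P (Finset.image g univ)) := by
  refine Finset.card_bij' (fun ψ _ => ψ ∘ e.symm) (fun g _ => g ∘ e) ?_ ?_ ?_ ?_
  · intro ψ hψ
    simp only [Finset.mem_filter, Finset.mem_univ, true_and] at hψ ⊢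
    have : Finset.image (ψ ∘ e.symm) univ = Finset.image ψ univ := by
      rw [← Finset.image_image, image_univ_equiv']
    rwa [this]
  · intro g hg
    simp only [Finset.mem_filter, Finset.mem_univ, true_and] at hg ⊢
    have : Finset.image (g ∘ e) univ = Finset.image g univ := by
      rw [← Finset.image_image, image_univ_equiv']
    rwa [this]
  · intro ψ _; funext a; simp
  · intro g _; funext a; simp

/-- The count for a single edge. -/
lemma cnt_single (hn : 0 < n) {f : Finset α} (hf : f.card = k) (b : Fin n) :
    cnt H {f} b = homCount (KEdge k) (lk H b) * n ^ (Fintype.card α - k) := by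
  classical
  have h1 : ∀ ψ : {x // x ∈ f} → Fin n,
      Yc H {f} b f ψ = if insert b (Finset.image ψ univ) ∈ H.edges
        then n ^ (Fintype.card α - k) else 0 := by
    intro ψ
    unfold Yc
    have hcong : ∀ φ : α → Fin n,
        (ok H {f} b φ ∧ res f φ = ψ) ↔
        ((insert b (Finset.image ψ univ) ∈ H.edges) ∧ res f φ = ψ) := by
      intro φ
      constructor
      · rintro ⟨ho, hr⟩
        refine ⟨?_, hr⟩
        have := ho f (Finset.mem_singleton_self f)
        rw [← hr, image_res]
        exact this
      · rintro ⟨hc, hr⟩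
        refine ⟨?_, hr⟩
        intro f' hf'
        rw [Finset.mem_singleton] at hf'
        subst hf'
        rw [← hr, image_res] at hc
        exact hc
    rw [Finset.filter_congr fun φ _ => hcong φ]
    by_cases hc : insert b (Finset.image ψ univ) ∈ H.edges
    · rw [if_pos hc]
      have : (univ.filter fun φ : α → Fin n =>
          (insert b (Finset.image ψ univ) ∈ H.edges) ∧ res f φ = ψ)
          = univ.filter fun φ : α → Fin n => res f φ = ψ := by
        refine Finset.filter_congr fun φ _ => ?_
        rw [and_iff_right hc]
      rw [this, card_res_fiber, hf]
    · rw [if_neg hc]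
      rw [Finset.card_eq_zero]
      rw [Finset.filter_eq_empty_iff]
      intro φ _
      rw [not_and]
      intro h; exact absurd h hc
  have h2 : cnt H {f} b = ∑ ψ : {x // x ∈ f} → Fin n,
      (if insert b (Finset.image ψ univ) ∈ H.edges then n ^ (Fintype.card α - k) else 0) := by
    rw [← sum_Yc H {f} b f]
    exact Finset.sum_congr rfl fun ψ _ => h1 ψ
  rw [h2, Finset.sum_ite, Finset.sum_const, Finset.sum_const_zero, add_zero, smul_eq_mul]
  congr 1
  have hcards : Fintype.card {x // x ∈ f} = k := by rw [Fintype.card_coe, hf]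
  have hmem : ∀ ψ : {x // x ∈ f} → Fin n,
      (insert b (Finset.image ψ univ) ∈ H.edges) ↔ Finset.image ψ univ ∈ lkE H b := by
    intro ψ
    rw [mem_lkE]
    exact le_trans Finset.card_image_le (by rw [Finset.card_univ, hcards])
  rw [Finset.filter_congr fun ψ _ => hmem ψ]
  have := card_filter_comp_equiv (X := Fin n) (Fintype.equivFinOfCardEq hcards)
    (fun S => S ∈ lkE H b)
  rw [this]
  unfold homCount homFinset KEdge lk
  congr 1
  refine (Finset.filter_congr fun g _ => ?_).symm
  simp

/-- Splitting off the cone point of a `(k+1)`-clique homomorphism. -/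
lemma sum_cK (hn : 0 < n) :
    ∑ b : Fin n, homCount (KEdge k) (lk H b) = homCount (KEdge (k+1)) H := by
  classical
  have himg : ∀ g : Fin (k+1) → Fin n,
      Finset.image g univ = insert (g 0) (Finset.image (g ∘ Fin.succ) univ) := by
    intro g
    ext y
    simp only [Finset.mem_image, Finset.mem_univ, true_and, Finset.mem_insert,
      Function.comp_apply]
    rw [Fin.exists_fin_succ]
    tauto
  have hmem : ∀ g : Fin (k+1) → Fin n,
      (Finset.image g univ ∈ H.edges) ↔
        Finset.image (g ∘ Fin.succ) univ ∈ lkE H (g 0) := by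
    intro g
    rw [himg g, ← mem_lkE]
    exact le_trans Finset.card_image_le (by simp)
  have hK : homCount (KEdge (k+1)) H
      = #(univ.filter fun g : Fin (k+1) → Fin n => Finset.image g univ ∈ H.edges) := by
    unfold homCount homFinset KEdge
    congr 1
    refine Finset.filter_congr fun g _ => ?_
    simp
  rw [hK,
    Finset.card_eq_sum_card_fiberwise (f := fun g : Fin (k+1) → Fin n => g 0)
      (t := univ) (fun x _ => Finset.mem_univ _)]
  refine Finset.sum_congr rfl fun b _ => ?_
  have hKk : homCount (KEdge k) (lk H b)
      = #(univ.filter fun h : Fin k → Fin n => Finset.image h univ ∈ lkE H b) := by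
    unfold homCount homFinset KEdge lk
    congr 1
    refine Finset.filter_congr fun g _ => ?_
    simp
  rw [hKk]
  refine Finset.card_bij' (fun h _ => Fin.cons b h) (fun g _ => g ∘ Fin.succ) ?_ ?_ ?_ ?_
  · intro h hh
    simp only [Finset.mem_filter, Finset.mem_univ, true_and] at hh ⊢
    constructor
    · rw [hmem]
      simpa [Fin.cons_succ] using hh
    · simp
  · intro g hg
    simp only [Finset.mem_filter, Finset.mem_univ, true_and] at hg ⊢
    rw [← hg.2]
    exact (hmem g).1 hg.1
  · intro h _
    funext i
    simp [Fin.cons_succ]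
  · intro g hg
    simp only [Finset.mem_filter, Finset.mem_univ, true_and] at hg
    funext i
    refine Fin.cases ?_ ?_ i
    · simp [hg.2]
    · intro j; simp [Fin.cons_succ]

/-- Decomposition of the homomorphism count of a link cone. -/
lemma homCount_linkCone {t : ℕ} (E : Fin t → Finset (Finset α))
    (hE : ∀ i, ∀ f ∈ E i, f.card = k) :
    homCount (linkCone E hE) H = ∑ φ : α → Fin n, ∏ i : Fin t, nb H (E i) φ := by
  classical
  have hP : ∀ Φ : (α ⊕ Fin t) → Fin n,
      (∀ e ∈ (linkCone E hE).edges, e.image Φ ∈ H.edges)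
        ↔ ∀ i : Fin t, ok H (E i) (Φ (Sum.inr i)) (Φ ∘ Sum.inl) := by
    intro Φ
    constructor
    · intro h i f hf
      have hmem : insert (Sum.inr i) (f.image Sum.inl) ∈ (linkCone E hE).edges := by
        simp only [linkCone, Finset.mem_biUnion, Finset.mem_image]
        exact ⟨i, Finset.mem_univ i, f, hf, rfl⟩
      have := h _ hmem
      rwa [Finset.image_insert, Finset.image_image] at this
    · intro h e he
      simp only [linkCone, Finset.mem_biUnion, Finset.mem_image] at he
      obtain ⟨i, -, f, hf, rfl⟩ := he
      rw [Finset.image_insert, Finset.image_image]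
      exact h i f hf
  unfold homCount homFinset
  rw [Finset.card_filter]
  have hre := Fintype.sum_equiv (Equiv.sumArrowEquivProdArrow α (Fin t) (Fin n))
    (fun Φ : (α ⊕ Fin t) → Fin n =>
      if ∀ e ∈ (linkCone E hE).edges, e.image Φ ∈ H.edges then (1:ℕ) else 0)
    (fun p : (α → Fin n) × (Fin t → Fin n) =>
      if ∀ i : Fin t, ok H (E i) (p.2 i) p.1 then (1:ℕ) else 0) ?_
  · rw [hre, Fintype.sum_prod_type]
    refine Finset.sum_congr rfl fun φ _ => ?_
    have inner : ∀ g : Fin t → Fin n,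
        (if ∀ i : Fin t, ok H (E i) (g i) φ then (1:ℕ) else 0)
          = ∏ i : Fin t, (if ok H (E i) (g i) φ then (1:ℕ) else 0) := by
      intro g
      rw [Finset.prod_boole]
      congr 1
      simp
    rw [Finset.sum_congr rfl fun g _ => inner g]
    have h2 : ∏ i : Fin t, nb H (E i) φ
        = ∏ i : Fin t, ∑ b : Fin n, (if ok H (E i) b φ then (1:ℕ) else 0) :=
      Finset.prod_congr rfl fun i _ => by rw [nb, Finset.card_filter]
    rw [h2, Finset.prod_univ_sum, Fintype.piFinset_univ]
  · intro Φ
    simp only [Equiv.sumArrowEquivProdArrow, Equiv.coe_fn_mk]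
    exact if_congr (hP Φ) rfl rfl

variable (M : HGraph k α)

/-- normalized homomorphism density of `M` into the link of `b`. -/
noncomputable def Wf (b : Fin n) : ℝ := (cnt H M.edges b : ℝ) / (n:ℝ) ^ (Fintype.card α)

/-- tilted weight. -/
noncomputable def uf (b : Fin n) : ℝ := Wf H M b ^ ((M.edges.card : ℝ)⁻¹)

noncomputable def Sf : ℝ := ∑ b, uf H M b

noncomputable def Lf : ℝ := ∑ b, (uf H M b / Sf H M) * Real.log (Wf H M b)

lemma Wf_nonneg (b : Fin n) : 0 ≤ Wf H M b :=
  div_nonneg (Nat.cast_nonneg _) (pow_nonneg (Nat.cast_nonneg _) _)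

lemma uf_nonneg (b : Fin n) : 0 ≤ uf H M b := Real.rpow_nonneg (Wf_nonneg H M b) _

lemma uf_eq_zero {b : Fin n} (hb : Wf H M b = 0) (he : M.edges.Nonempty) : uf H M b = 0 := by
  rw [uf, hb, Real.zero_rpow]
  simp only [ne_eq, inv_eq_zero, Nat.cast_eq_zero]
  exact (Finset.card_pos.2 he).ne'

/-- homDensity of `M` itself in a link. -/
lemma homDensity_M (b : Fin n) : homDensity M (lk H b) = Wf H M b := by
  have h1 : homCount M (lk H b) = cnt H M.edges b := homCount_eq_cnt H M.edges M.uniform b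
  rw [homDensity, Wf, h1, Fintype.card_fin]

/-- homDensity of a sub-edge-set graph in a link, as counts. -/
lemma homDensity_sub (A : Finset (Finset α)) (hA : A ⊆ M.edges) (b : Fin n) :
    homDensity (⟨A, fun e he => M.uniform e (hA he)⟩ : HGraph k α) (lk H b)
      = (cnt H A b : ℝ) / (n:ℝ) ^ (Fintype.card α) := by
  rw [homDensity, homCount_eq_cnt H A (fun e he => M.uniform e (hA he)), Fintype.card_fin]

/-- Single edge density in a link equals edge density of the link. -/
lemma q_le_W_rpow (hn : 0 < n) (hM : IsDominating M) (hMne : M.edges.Nonempty) (b : Fin n) :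
    (homCount (KEdge k) (lk H b) : ℝ) / (n:ℝ) ^ k ≤ uf H M b := by
  obtain ⟨f, hf⟩ := hMne
  have hkcard : k ≤ Fintype.card α := by
    rw [← M.uniform f hf]
    exact le_trans (Finset.card_le_card (Finset.subset_univ f)) (le_of_eq (Finset.card_univ))
  have hdom := hM {f} (by simpa using hf) ⟨f, Finset.mem_singleton_self f⟩ (Fin n) (lk H b)
  rw [homDensity_M] at hdom
  rw [homDensity_sub H M {f} (by simpa using hf)] at hdom
  rw [Finset.card_singleton] at hdom
  rw [Nat.cast_one, inv_one, Real.rpow_one] at hdom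
  rw [cnt_single H hn (M.uniform f hf)] at hdom
  refine le_trans (le_of_eq ?_) hdom
  have hnpos : (0:ℝ) < (n:ℝ) ^ k := pow_pos (by exact_mod_cast hn) k
  have : (n:ℝ) ^ (Fintype.card α) = (n:ℝ) ^ (Fintype.card α - k) * (n:ℝ) ^ k := by
    rw [← pow_add]
    congr 1
    omega
  rw [this]
  push_cast
  have hn2 : (0:ℝ) < (n:ℝ) ^ (Fintype.card α - k) := pow_pos (by exact_mod_cast hn) _
  field_simp

/-- `∑ q = n p`. -/
lemma sum_q (hn : 0 < n) :
    ∑ b : Fin n, (homCount (KEdge k) (lk H b) : ℝ) / (n:ℝ) ^ k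
      = (n:ℝ) * edgeDensity H := by
  rw [← Finset.sum_div]
  rw [show (∑ b : Fin n, (homCount (KEdge k) (lk H b) : ℝ))
      = ((∑ b : Fin n, homCount (KEdge k) (lk H b) : ℕ) : ℝ) by push_cast; rfl]
  rw [sum_cK H hn]
  rw [edgeDensity, homDensity, Fintype.card_fin, Fintype.card_fin]
  have hnp : (0:ℝ) < (n:ℝ) := by exact_mod_cast hn
  rw [pow_succ]
  field_simp

lemma S_lb (hn : 0 < n) (hM : IsDominating M) (hMne : M.edges.Nonempty) :
    (n:ℝ) * edgeDensity H ≤ Sf H M := by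
  rw [← sum_q H hn, Sf]
  exact Finset.sum_le_sum fun b _ => q_le_W_rpow H M hn hM hMne b

lemma S_pos (hn : 0 < n) (hM : IsDominating M) (hMne : M.edges.Nonempty)
    (hp : 0 < edgeDensity H) : 0 < Sf H M :=
  lt_of_lt_of_le (by positivity) (S_lb H M hn hM hMne)

/-- key lower bound for the tilted log-average `Λ`. -/
lemma Lam_lb (hn : 0 < n) (hM : IsDominating M) (hMne : M.edges.Nonempty)
    (hp : 0 < edgeDensity H) :
    (M.edges.card : ℝ) * (Real.log (Sf H M) - Real.log n) ≤ Lf H M := by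
  have hS := S_pos H M hn hM hMne hp
  have hcard : ((univ : Finset (Fin n)).card : ℝ) = (n:ℝ) := by simp
  have hkey := sum_mul_log_self_ge (univ : Finset (Fin n)) (fun b => uf H M b)
    (fun b _ => uf_nonneg H M b) (by rw [← Sf]; exact hS)
  rw [hcard] at hkey
  rw [← Sf] at hkey
  -- ∑ uf log uf = (e)⁻¹ ∑ uf log W
  have hterm : ∀ b : Fin n, uf H M b * Real.log (uf H M b)
      = ((M.edges.card:ℝ))⁻¹ * (uf H M b * Real.log (Wf H M b)) := by
    intro b
    rcases eq_or_lt_of_le (Wf_nonneg H M b) with h | h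
    · rw [uf_eq_zero H M h.symm hMne]; simp
    · rw [uf, Real.log_rpow h]; ring
  rw [Finset.sum_congr rfl fun b _ => hterm b, ← Finset.mul_sum] at hkey
  -- Lf = (1/S) ∑ uf log W
  have hL : Lf H M = (Sf H M)⁻¹ * ∑ b, uf H M b * Real.log (Wf H M b) := by
    rw [Lf, Finset.mul_sum]
    exact Finset.sum_congr rfl fun b _ => by field_simp
  rw [hL]
  have hepos : (0:ℝ) < (M.edges.card : ℝ) := by
    exact_mod_cast Finset.card_pos.2 hMne
  have h2 : (M.edges.card:ℝ) * (Sf H M * (Real.log (Sf H M) - Real.log ↑n))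
      ≤ ∑ b, uf H M b * Real.log (Wf H M b) := by
    have := mul_le_mul_of_nonneg_left hkey hepos.le
    rwa [mul_inv_cancel_left₀ hepos.ne'] at this
  rw [inv_mul_eq_div, le_div_iff₀ hS]
  nlinarith [h2]

lemma cnt_empty (hn : 0 < n) (b : Fin n) : cnt H (∅ : Finset (Finset α)) b = n ^ (Fintype.card α) := by
  unfold cnt
  rw [Finset.filter_true_of_mem (fun φ _ => by intro f hf; simp at hf)]
  rw [Finset.card_univ, Fintype.card_fun, Fintype.card_fin]

/-- Domination: the count avoiding `V`, in log form. -/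
lemma log_cnt_avoid (hn : 0 < n) (hM : IsDominating M) (hMne : M.edges.Nonempty)
    (V : Finset α) {b : Fin n} (hb : 0 < cnt H M.edges b) :
    Real.log (cnt H (M.edges.filter fun f => ¬ ∃ v ∈ V, v ∈ f) b)
      ≤ (1 - (degNear M V : ℝ) / (M.edges.card : ℝ)) * Real.log (Wf H M b)
        + (Fintype.card α : ℝ) * Real.log n := by
  classical
  set E' := M.edges.filter fun f => ¬ ∃ v ∈ V, v ∈ f with hE'
  have hsub : E' ⊆ M.edges := Finset.filter_subset _ _
  have hcards : degNear M V + E'.card = M.edges.card := by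
    rw [degNear, hE']
    exact Finset.card_filter_add_card_filter_not _
  have hW : 0 < Wf H M b := by
    rw [Wf]
    have : (0:ℝ) < (cnt H M.edges b : ℝ) := by exact_mod_cast hb
    positivity
  have hnA : (0:ℝ) < (n:ℝ) ^ (Fintype.card α) := by positivity
  have hepos : 0 < M.edges.card := Finset.card_pos.2 hMne
  have hlogn : Real.log ((n:ℝ) ^ (Fintype.card α)) = (Fintype.card α : ℝ) * Real.log n :=
    Real.log_pow _ _
  rcases Finset.eq_empty_or_nonempty E' with hEe | hEne
  · -- E' empty : degNear = card, coefficient 0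
    have hd : (degNear M V : ℝ) = (M.edges.card : ℝ) := by
      rw [hEe] at hcards; push_cast [← hcards]; simp
    rw [hd, div_self (by exact_mod_cast hepos.ne'), sub_self, zero_mul, zero_add]
    rw [hEe, cnt_empty H hn b]
    rw [← hlogn]
    push_cast
    rfl
  · have hdom := hM E' hsub hEne (Fin n) (lk H b)
    rw [homDensity_M, homDensity_sub H M E' hsub] at hdom
    set y : ℝ := (cnt H E' b : ℝ) / (n:ℝ) ^ (Fintype.card α) with hy
    have hy0 : 0 ≤ y := by positivity
    have hm0 : E'.card ≠ 0 := (Finset.card_pos.2 hEne).ne'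
    -- y ≤ W ^ (m/e)
    have hstep : y ≤ Wf H M b ^ ((E'.card : ℝ) * (M.edges.card : ℝ)⁻¹) := by
      have h1 : (y ^ ((E'.card : ℝ))⁻¹) ^ (E'.card : ℕ) = y :=
        Real.rpow_inv_natCast_pow hy0 hm0
      have h2 : (y ^ ((E'.card : ℝ))⁻¹) ^ (E'.card : ℕ)
          ≤ (Wf H M b ^ ((M.edges.card : ℝ))⁻¹) ^ (E'.card : ℕ) :=
        pow_le_pow_left₀ (Real.rpow_nonneg hy0 _) hdom _
      rw [h1] at h2
      refine le_trans h2 (le_of_eq ?_)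
      rw [← Real.rpow_natCast (Wf H M b ^ ((M.edges.card : ℝ))⁻¹) E'.card,
        ← Real.rpow_mul (le_of_lt hW)]
      rw [mul_comm]
    -- take logs
    have hcntE : 0 < cnt H E' b := lt_of_lt_of_le hb (cnt_mono H hsub b)
    have hyp : 0 < y := by
      rw [hy]
      have : (0:ℝ) < (cnt H E' b : ℝ) := by exact_mod_cast hcntE
      positivity
    have hlog := Real.log_le_log hyp hstep
    rw [Real.log_rpow hW] at hlog
    have hylog : Real.log y = Real.log (cnt H E' b) - (Fintype.card α : ℝ) * Real.log n := by
      rw [hy, Real.log_div (by exact_mod_cast hcntE.ne') hnA.ne', hlogn]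
    rw [hylog] at hlog
    have hcoef : (E'.card : ℝ) * (M.edges.card : ℝ)⁻¹
        = 1 - (degNear M V : ℝ) / (M.edges.card : ℝ) := by
      have : (E'.card : ℝ) = (M.edges.card : ℝ) - (degNear M V : ℝ) := by
        push_cast [← hcards]; ring
      rw [this]
      field_simp
    rw [hcoef] at hlog
    linarith

set_option maxHeartbeats 1600000 in
/-- Per-apex lower bound. -/
lemma apex_bound (hn : 0 < n) (hM : IsDominating M) (hMne : M.edges.Nonempty)
    (hp : 0 < edgeDensity H) (hk : 1 ≤ k)
    (A : Finset (Finset α)) (hA : A ⊆ M.edges) (hAne : A.Nonempty) :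
    Real.log n + (degNear M (edgeSupport A) : ℝ) * Real.log (edgeDensity H) ≤
      ∑ b : Fin n, ∑ ψ : {x // x ∈ edgeSupport A} → Fin n,
        ((uf H M b / Sf H M) * ((Yc H M.edges b (edgeSupport A) ψ : ℝ) / (cnt H M.edges b)))
          * Real.log (nb H A (ext hn (edgeSupport A) ψ)) := by
  classical
  set V := edgeSupport A with hV
  set S := Sf H M with hSdef
  set d := degNear M V with hd
  set e := M.edges.card with he
  have hS : 0 < S := S_pos H M hn hM hMne hp
  have hepos : 0 < e := Finset.card_pos.2 hMne
  have heR : (0:ℝ) < (e:ℝ) := by exact_mod_cast hepos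
  have hnR : (0:ℝ) < (n:ℝ) := by exact_mod_cast hn
  have hAV : ∀ f ∈ A, f ⊆ V := by
    intro f hf x hx
    exact Finset.mem_biUnion.2 ⟨f, hf, hx⟩
  have hd1 : 1 ≤ d := by
    obtain ⟨f, hf⟩ := hAne
    have hfM : f ∈ M.edges := hA hf
    have hfne : f.Nonempty := by
      rw [← Finset.card_pos, M.uniform f hfM]; omega
    obtain ⟨x, hx⟩ := hfne
    refine Finset.card_pos.2 ⟨f, Finset.mem_filter.2 ⟨hfM, ⟨x, hAV f hf hx, hx⟩⟩⟩
  have hde : d ≤ e := Finset.card_le_card (Finset.filter_subset _ _)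
  -- weights
  set aw : Fin n → ({x // x ∈ V} → Fin n) → ℝ := fun b ψ =>
    (uf H M b / S) * ((Yc H M.edges b V ψ : ℝ) / (cnt H M.edges b)) with haw
  have haw0 : ∀ b ψ, 0 ≤ aw b ψ := fun b ψ => by
    apply mul_nonneg
    · exact div_nonneg (uf_nonneg H M b) hS.le
    · positivity
  have hcM_of_u : ∀ b : Fin n, uf H M b ≠ 0 → 0 < cnt H M.edges b := by
    intro b hu
    by_contra hc
    have : cnt H M.edges b = 0 := by omega
    refine hu (uf_eq_zero H M ?_ hMne)
    rw [Wf, this]; simp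
  have hsum_in : ∀ b : Fin n, ∑ ψ : {x // x ∈ V} → Fin n,
      ((Yc H M.edges b V ψ : ℝ) / (cnt H M.edges b))
        = if cnt H M.edges b = 0 then 0 else 1 := by
    intro b
    rw [← Finset.sum_div]
    have : (∑ ψ : {x // x ∈ V} → Fin n, (Yc H M.edges b V ψ : ℝ))
        = (cnt H M.edges b : ℝ) := by
      rw [show (∑ ψ : {x // x ∈ V} → Fin n, (Yc H M.edges b V ψ : ℝ))
          = ((∑ ψ : {x // x ∈ V} → Fin n, Yc H M.edges b V ψ : ℕ) : ℝ) by push_cast; rfl]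
      rw [sum_Yc]
    rw [this]
    split_ifs with hc
    · rw [hc]; simp
    · rw [div_self (by exact_mod_cast hc)]
  have hsum_u : ∑ b, uf H M b / S = 1 := by
    rw [← Finset.sum_div]
    rw [show (∑ b, uf H M b) = S from rfl, div_self hS.ne']
  have hsum_aw : ∑ ψ : {x // x ∈ V} → Fin n, ∑ b, aw b ψ = 1 := by
    rw [Finset.sum_comm]
    have : ∀ b, ∑ ψ : {x // x ∈ V} → Fin n, aw b ψ = uf H M b / S := by
      intro b
      rw [haw]
      simp only
      rw [← Finset.mul_sum, hsum_in b]
      split_ifs with hc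
      · rw [mul_zero]
        have : Wf H M b = 0 := by rw [Wf, hc]; simp
        rw [uf_eq_zero H M this hMne, zero_div]
      · rw [mul_one]
    rw [Finset.sum_congr rfl fun b _ => this b]
    exact hsum_u
  set NN : ({x // x ∈ V} → Fin n) → ℕ := fun ψ => nb H A (ext hn V ψ) with hNNdef
  have hvalid : ∀ b ψ, 0 < aw b ψ → ok H A b (ext hn V ψ) := by
    intro b ψ hpos
    have hY : 0 < Yc H M.edges b V ψ := by
      by_contra hc
      have h0 : Yc H M.edges b V ψ = 0 := by omega
      rw [haw] at hpos
      simp only [h0] at hpos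
      norm_num at hpos
    obtain ⟨φ, hφ⟩ := Finset.card_pos.1 hY
    rw [Finset.mem_filter] at hφ
    obtain ⟨-, hok, hres⟩ := hφ
    have hokA : ok H A b φ := fun f hf => hok f (hA hf)
    have hre : res V φ = res V (ext hn V ψ) := by rw [res_ext, hres]
    exact (ok_congr_of_res_eq H hAV hre).1 hokA
  have hNN1 : ∀ b ψ, 0 < aw b ψ → 1 ≤ NN ψ := by
    intro b ψ hpos
    refine Finset.card_pos.2 ⟨b, Finset.mem_filter.2 ⟨Finset.mem_univ b, hvalid b ψ hpos⟩⟩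
  -- per-ψ Gibbs step
  have hgibbs : ∀ ψ : {x // x ∈ V} → Fin n,
      (∑ b, aw b ψ) * Real.log (∑ b, aw b ψ) - (∑ b, aw b ψ * Real.log (aw b ψ))
        ≤ ∑ b, aw b ψ * Real.log (NN ψ) := by
    intro ψ
    set Aψ := ∑ b, aw b ψ with hAψ
    have hA0 : 0 ≤ Aψ := Finset.sum_nonneg fun b _ => haw0 b ψ
    rcases eq_or_lt_of_le hA0 with hz | hz
    · have hall : ∀ b ∈ (univ : Finset (Fin n)), aw b ψ = 0 := by
        intro b hb
        have := (Finset.sum_eq_zero_iff_of_nonneg (fun b _ => haw0 b ψ)).1 hz.symm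
        exact this b hb
      rw [← hz]
      rw [Finset.sum_congr rfl fun b hb => by rw [hall b hb, zero_mul],
        Finset.sum_congr rfl (fun b hb => by rw [hall b hb, zero_mul] : ∀ b ∈ univ,
          aw b ψ * Real.log (NN ψ) = 0)]
      simp
    · obtain ⟨b₀, -, hb₀⟩ : ∃ b ∈ (univ : Finset (Fin n)), 0 < aw b ψ := by
        by_contra hc
        push_neg at hc
        have : Aψ ≤ 0 := Finset.sum_nonpos fun b hb => hc b hb
        linarith
      have hNNψ : 1 ≤ NN ψ := hNN1 b₀ ψ hb₀
      have hsumt : ∑ b : Fin n, (if ok H A b (ext hn V ψ) then (1:ℝ) else 0) = (NN ψ : ℝ) := by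
        rw [hNNdef]
        simp only [nb]
        rw [Finset.card_filter]
        push_cast
        rfl
      have hg := gibbs_log (univ : Finset (Fin n)) (fun b => aw b ψ / Aψ)
        (fun b => if ok H A b (ext hn V ψ) then (1:ℝ) else 0)
        (fun b _ => div_nonneg (haw0 b ψ) hA0)
        (by rw [← Finset.sum_div, ← hAψ, div_self hz.ne'])
        (fun b _ => by split_ifs <;> norm_num)
        (fun b _ hb => by
          have haa : 0 < aw b ψ := by
            by_contra hc
            push_neg at hc
            have h00 : aw b ψ = 0 := le_antisymm hc (haw0 b ψ)
            rw [h00, zero_div] at hb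
            exact lt_irrefl 0 hb
          rw [if_pos (hvalid b ψ haa)]
          norm_num)
        (by rw [hsumt]; exact_mod_cast Nat.lt_of_lt_of_le Nat.zero_lt_one hNNψ)
      rw [hsumt] at hg
      -- transform LHS of hg
      have hterm : ∀ b : Fin n, (aw b ψ / Aψ) * Real.log
          ((if ok H A b (ext hn V ψ) then (1:ℝ) else 0) / (aw b ψ / Aψ))
            = (aw b ψ / Aψ) * (Real.log Aψ - Real.log (aw b ψ)) := by
        intro b
        rcases eq_or_lt_of_le (haw0 b ψ) with hb | hb
        · rw [← hb]; simp
        · rw [if_pos (hvalid b ψ hb)]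
          rw [one_div, Real.log_inv, Real.log_div hb.ne' hz.ne']
          ring
      rw [Finset.sum_congr rfl fun b _ => hterm b] at hg
      have hexp : ∑ b : Fin n, (aw b ψ / Aψ) * (Real.log Aψ - Real.log (aw b ψ))
          = Real.log Aψ - (Aψ)⁻¹ * ∑ b, aw b ψ * Real.log (aw b ψ) := by
        rw [Finset.sum_congr rfl (fun b _ => by field_simp :
          ∀ b ∈ univ, (aw b ψ / Aψ) * (Real.log Aψ - Real.log (aw b ψ))
            = (aw b ψ * Real.log Aψ - aw b ψ * Real.log (aw b ψ)) / Aψ)]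
        rw [← Finset.sum_div, Finset.sum_sub_distrib, ← Finset.sum_mul, ← hAψ]
        field_simp
      rw [hexp] at hg
      have hg2 := mul_le_mul_of_nonneg_left hg hA0
      rw [mul_sub, mul_inv_cancel_left₀ hz.ne'] at hg2
      calc Aψ * Real.log Aψ - ∑ b, aw b ψ * Real.log (aw b ψ)
          ≤ Aψ * Real.log (NN ψ) := by linarith
        _ = ∑ b, aw b ψ * Real.log (NN ψ) := by rw [← Finset.sum_mul, ← hAψ]
  -- entropy of the ψ-marginal is at most |V| log n
  have hAA : -((V.card:ℝ) * Real.log n) ≤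
      ∑ ψ : {x // x ∈ V} → Fin n, (∑ b, aw b ψ) * Real.log (∑ b, aw b ψ) := by
    have hkey := sum_mul_log_self_ge (univ : Finset ({x // x ∈ V} → Fin n))
      (fun ψ => ∑ b, aw b ψ) (fun ψ _ => Finset.sum_nonneg fun b _ => haw0 b ψ)
      (by rw [hsum_aw]; norm_num)
    rw [hsum_aw, Real.log_one, one_mul] at hkey
    have hcard : (((univ : Finset ({x // x ∈ V} → Fin n)).card : ℕ) : ℝ)
        = ((n:ℝ)) ^ (V.card) := by
      rw [Finset.card_univ, Fintype.card_fun, Fintype.card_coe, Fintype.card_fin]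
      push_cast
      rfl
    rw [hcard, Real.log_pow] at hkey
    calc -((V.card:ℝ) * Real.log n) = 0 - (V.card:ℝ) * Real.log n := by ring
      _ ≤ ∑ ψ : {x // x ∈ V} → Fin n, (∑ b, aw b ψ) * Real.log (∑ b, aw b ψ) := hkey
  -- the avoiding edge set
  set E' := M.edges.filter (fun f => ¬ ∃ v ∈ V, v ∈ f) with hE'
  have hE'sub : E' ⊆ M.edges := Finset.filter_subset _ _
  have hE'avoid : ∀ f ∈ E', ∀ x ∈ f, x ∉ V := by
    intro f hf x hx hxV
    rw [hE', Finset.mem_filter] at hf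
    exact hf.2 ⟨x, hxV, hx⟩
  -- bound on the conditional entropy of φ given ψ
  have hkappa : ∀ b : Fin n, 0 < cnt H M.edges b →
      ∑ ψ : {x // x ∈ V} → Fin n, ((Yc H M.edges b V ψ : ℝ) / (cnt H M.edges b))
          * Real.log (Yc H M.edges b V ψ)
        ≤ (1 - (d:ℝ)/(e:ℝ)) * Real.log (Wf H M b)
          + ((Fintype.card α : ℝ) - (V.card:ℝ)) * Real.log n := by
    intro b hb
    have hstep : ∀ ψ : {x // x ∈ V} → Fin n,
        ((Yc H M.edges b V ψ : ℝ) / (cnt H M.edges b)) * Real.log (Yc H M.edges b V ψ)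
          ≤ ((Yc H M.edges b V ψ : ℝ) / (cnt H M.edges b))
            * (Real.log (cnt H E' b) - (V.card : ℝ) * Real.log n) := by
      intro ψ
      rcases Nat.eq_zero_or_pos (Yc H M.edges b V ψ) with hY | hY
      · rw [hY]; simp
      · refine mul_le_mul_of_nonneg_left ?_ (by positivity)
        have hmul : Yc H M.edges b V ψ * n ^ V.card ≤ cnt H E' b := by
          calc Yc H M.edges b V ψ * n ^ V.card
              ≤ Yc H E' b V ψ * n ^ V.card :=
                Nat.mul_le_mul_right _ (Yc_mono H hE'sub b V ψ)
            _ = cnt H E' b := Yc_mul H hE'avoid b ψ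
        have hYR : (0:ℝ) < (Yc H M.edges b V ψ : ℝ) := by exact_mod_cast hY
        have hprod : (0:ℝ) < (Yc H M.edges b V ψ : ℝ) * (n:ℝ)^V.card := by positivity
        have hlog := Real.log_le_log hprod
          (show (Yc H M.edges b V ψ : ℝ) * (n:ℝ)^V.card ≤ (cnt H E' b : ℝ) by
            exact_mod_cast hmul)
        rw [Real.log_mul hYR.ne' (by positivity), Real.log_pow] at hlog
        linarith
    have hsum3 : ∑ ψ : {x // x ∈ V} → Fin n,
        ((Yc H M.edges b V ψ : ℝ) / (cnt H M.edges b))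
          * (Real.log (cnt H E' b) - (V.card : ℝ) * Real.log n)
        = Real.log (cnt H E' b) - (V.card : ℝ) * Real.log n := by
      rw [← Finset.sum_mul, hsum_in b, if_neg hb.ne', one_mul]
    have hE'log := log_cnt_avoid H M hn hM hMne V hb
    rw [← hd, ← he] at hE'log
    rw [← hE'] at hE'log
    calc ∑ ψ : {x // x ∈ V} → Fin n, ((Yc H M.edges b V ψ : ℝ) / (cnt H M.edges b))
          * Real.log (Yc H M.edges b V ψ)
        ≤ ∑ ψ : {x // x ∈ V} → Fin n, ((Yc H M.edges b V ψ : ℝ) / (cnt H M.edges b))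
          * (Real.log (cnt H E' b) - (V.card : ℝ) * Real.log n) :=
          Finset.sum_le_sum fun ψ _ => hstep ψ
      _ = Real.log (cnt H E' b) - (V.card : ℝ) * Real.log n := hsum3
      _ ≤ (1 - (d:ℝ)/(e:ℝ)) * Real.log (Wf H M b)
          + ((Fintype.card α : ℝ) - (V.card:ℝ)) * Real.log n := by linarith
  -- per-b bound on ∑_ψ a log a
  have hinner : ∀ b : Fin n, ∑ ψ : {x // x ∈ V} → Fin n, aw b ψ * Real.log (aw b ψ)
      ≤ (uf H M b / S) * (((1:ℝ)/(e:ℝ) - (d:ℝ)/(e:ℝ)) * Real.log (Wf H M b)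
          - Real.log S - (V.card:ℝ) * Real.log n) := by
    intro b
    rcases eq_or_lt_of_le (uf_nonneg H M b) with hu | hu
    · have hz : ∀ ψ : {x // x ∈ V} → Fin n, aw b ψ = 0 := by
        intro ψ
        rw [haw]
        dsimp only
        rw [← hu, zero_div, zero_mul]
      rw [Finset.sum_congr rfl fun ψ _ => by rw [hz ψ, zero_mul], ← hu]
      simp
    · have hcM : 0 < cnt H M.edges b := hcM_of_u b hu.ne'
      have hcMr : (0:ℝ) < (cnt H M.edges b : ℝ) := by exact_mod_cast hcM
      have hW : 0 < Wf H M b := by rw [Wf]; positivity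
      have hlogu : Real.log (uf H M b) = ((e:ℝ))⁻¹ * Real.log (Wf H M b) := by
        rw [uf, Real.log_rpow hW, ← he]
      have hlogcM : Real.log (cnt H M.edges b)
          = Real.log (Wf H M b) + (Fintype.card α : ℝ) * Real.log n := by
        rw [Wf, Real.log_div hcMr.ne' (by positivity), Real.log_pow]
        ring
      have huS : 0 < uf H M b / S := div_pos hu hS
      have hterm : ∀ ψ : {x // x ∈ V} → Fin n, aw b ψ * Real.log (aw b ψ)
          = (uf H M b / S) *
            (((Yc H M.edges b V ψ : ℝ)/(cnt H M.edges b))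
                * (Real.log (uf H M b / S) - Real.log (cnt H M.edges b))
              + ((Yc H M.edges b V ψ : ℝ)/(cnt H M.edges b))
                  * Real.log (Yc H M.edges b V ψ)) := by
        intro ψ
        rcases Nat.eq_zero_or_pos (Yc H M.edges b V ψ) with hY | hY
        · rw [haw]
          dsimp only
          rw [hY]
          simp
        · have hYR : (0:ℝ) < (Yc H M.edges b V ψ : ℝ) := by exact_mod_cast hY
          have hYc : 0 < (Yc H M.edges b V ψ : ℝ) / (cnt H M.edges b) := div_pos hYR hcMr
          rw [haw]
          dsimp only
          rw [Real.log_mul huS.ne' hYc.ne', Real.log_div hYR.ne' hcMr.ne']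
          ring
      rw [Finset.sum_congr rfl fun ψ _ => hterm ψ, ← Finset.mul_sum]
      refine mul_le_mul_of_nonneg_left ?_ huS.le
      rw [Finset.sum_add_distrib, ← Finset.sum_mul, hsum_in b, if_neg hcM.ne', one_mul]
      have hlogdiv : Real.log (uf H M b / S) = ((e:ℝ))⁻¹ * Real.log (Wf H M b) - Real.log S := by
        rw [Real.log_div hu.ne' hS.ne', hlogu]
      have hk2 := hkappa b hcM
      rw [hlogdiv, hlogcM]
      have : ((1:ℝ)/(e:ℝ) - (d:ℝ)/(e:ℝ)) = (e:ℝ)⁻¹ - (d:ℝ)/(e:ℝ) := by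
        rw [one_div]
      rw [this]
      linarith
  -- final assembly
  have hLf : Lf H M = ∑ b, (uf H M b / S) * Real.log (Wf H M b) := rfl
  have hsum_inner : ∑ b, ∑ ψ : {x // x ∈ V} → Fin n, aw b ψ * Real.log (aw b ψ)
      ≤ ((1:ℝ)/(e:ℝ) - (d:ℝ)/(e:ℝ)) * Lf H M - Real.log S - (V.card:ℝ) * Real.log n := by
    calc ∑ b, ∑ ψ : {x // x ∈ V} → Fin n, aw b ψ * Real.log (aw b ψ)
        ≤ ∑ b, (uf H M b / S) * (((1:ℝ)/(e:ℝ) - (d:ℝ)/(e:ℝ)) * Real.log (Wf H M b)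
          - Real.log S - (V.card:ℝ) * Real.log n) :=
          Finset.sum_le_sum fun b _ => hinner b
      _ = ((1:ℝ)/(e:ℝ) - (d:ℝ)/(e:ℝ)) * (∑ b, (uf H M b / S) * Real.log (Wf H M b))
          - (∑ b, uf H M b / S) * Real.log S
          - (∑ b, uf H M b / S) * ((V.card:ℝ) * Real.log n) := by
          rw [Finset.mul_sum, Finset.sum_mul, Finset.sum_mul]
          rw [← Finset.sum_sub_distrib, ← Finset.sum_sub_distrib]
          refine Finset.sum_congr rfl fun b _ => ?_
          ring
      _ = ((1:ℝ)/(e:ℝ) - (d:ℝ)/(e:ℝ)) * Lf H M - Real.log S - (V.card:ℝ) * Real.log n := by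
          rw [hsum_u, hLf, one_mul, one_mul]
  have hswap : ∑ b, ∑ ψ : {x // x ∈ V} → Fin n,
        aw b ψ * Real.log (NN ψ)
      = ∑ ψ : {x // x ∈ V} → Fin n, ∑ b, aw b ψ * Real.log (NN ψ) := Finset.sum_comm
  have hswap2 : ∑ ψ : {x // x ∈ V} → Fin n, ∑ b, aw b ψ * Real.log (aw b ψ)
      = ∑ b, ∑ ψ : {x // x ∈ V} → Fin n, aw b ψ * Real.log (aw b ψ) := Finset.sum_comm
  have hmain : Real.log S + ((d:ℝ)/(e:ℝ) - 1/(e:ℝ)) * Lf H M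
      ≤ ∑ b, ∑ ψ : {x // x ∈ V} → Fin n, aw b ψ * Real.log (NN ψ) := by
    rw [hswap]
    have h1 : ∑ ψ : {x // x ∈ V} → Fin n,
        ((∑ b, aw b ψ) * Real.log (∑ b, aw b ψ) - (∑ b, aw b ψ * Real.log (aw b ψ)))
        ≤ ∑ ψ : {x // x ∈ V} → Fin n, ∑ b, aw b ψ * Real.log (NN ψ) :=
      Finset.sum_le_sum fun ψ _ => hgibbs ψ
    rw [Finset.sum_sub_distrib, hswap2] at h1
    have h2 := hAA
    have h3 := hsum_inner
    linarith
  -- numeric conclusion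
  have hlogS : Real.log n + Real.log (edgeDensity H) ≤ Real.log S := by
    have h1 : (n:ℝ) * edgeDensity H ≤ S := S_lb H M hn hM hMne
    have h2 : Real.log ((n:ℝ) * edgeDensity H) ≤ Real.log S :=
      Real.log_le_log (by positivity) h1
    rwa [Real.log_mul hnR.ne' hp.ne'] at h2
  have hLam : (e:ℝ) * Real.log (edgeDensity H) ≤ Lf H M := by
    have h1 := Lam_lb H M hn hM hMne hp
    rw [← he] at h1
    have h2 : Real.log (edgeDensity H) ≤ Real.log S - Real.log n := by linarith
    calc (e:ℝ) * Real.log (edgeDensity H) ≤ (e:ℝ) * (Real.log S - Real.log n) :=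
        mul_le_mul_of_nonneg_left h2 heR.le
      _ ≤ Lf H M := h1
  have hcoef : 0 ≤ (d:ℝ)/(e:ℝ) - 1/(e:ℝ) := by
    rw [div_sub_div_same, le_div_iff₀ heR, zero_mul, sub_nonneg]
    exact_mod_cast hd1
  have hfin : Real.log n + (d:ℝ) * Real.log (edgeDensity H)
      ≤ Real.log S + ((d:ℝ)/(e:ℝ) - 1/(e:ℝ)) * Lf H M := by
    have h4 : ((d:ℝ)/(e:ℝ) - 1/(e:ℝ)) * ((e:ℝ) * Real.log (edgeDensity H))
        ≤ ((d:ℝ)/(e:ℝ) - 1/(e:ℝ)) * Lf H M :=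
      mul_le_mul_of_nonneg_left hLam hcoef
    have heR' : (e:ℝ) ≠ 0 := heR.ne'
    have h5 : ((d:ℝ)/(e:ℝ) - 1/(e:ℝ)) * ((e:ℝ) * Real.log (edgeDensity H))
        = ((d:ℝ) - 1) * Real.log (edgeDensity H) := by
      field_simp
    rw [h5] at h4
    have hd1R : (1:ℝ) ≤ (d:ℝ) := by exact_mod_cast hd1
    nlinarith [hlogS, h4]
  exact le_trans hfin hmain

lemma sum_ite_ok (A : Finset (Finset α)) (b : Fin n) (x : ℝ) :
    ∑ φ : α → Fin n, (if ok H A b φ then x else 0) = (cnt H A b : ℝ) * x := by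
  rw [Finset.sum_ite, Finset.sum_const, Finset.sum_const_zero, add_zero, nsmul_eq_mul]
  rfl

lemma nb_eq_of_res (hn : 0 < n) {A : Finset (Finset α)} {V : Finset α}
    (hAV : ∀ f ∈ A, f ⊆ V) {φ : α → Fin n} {ψ : {x // x ∈ V} → Fin n}
    (hres : res V φ = ψ) : nb H A φ = nb H A (ext hn V ψ) := by
  unfold nb
  congr 1
  refine Finset.filter_congr fun b _ => ?_
  exact ok_congr_of_res_eq H hAV (by rw [res_ext, hres])

lemma degNear_support_self (hk : 1 ≤ k) : degNear M (edgeSupport M.edges) = M.edges.card := by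
  unfold degNear
  rw [Finset.filter_true_of_mem]
  intro f hf
  have hne : f.Nonempty := by
    rw [← Finset.card_pos, M.uniform f hf]; omega
  obtain ⟨x, hx⟩ := hne
  exact ⟨x, Finset.mem_biUnion.2 ⟨f, hf, hx⟩, hx⟩

lemma degNear_empty : degNear M (edgeSupport (∅ : Finset (Finset α))) = 0 := by
  unfold degNear edgeSupport
  rw [Finset.card_eq_zero, Finset.filter_eq_empty_iff]
  intro f _
  simp

set_option maxHeartbeats 1600000 in
/-- The master counting bound. -/
lemma main_count {t : ℕ} (hk : 1 ≤ k) (hn : 0 < n) (hM : IsDominating M)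
    (hp : 0 < edgeDensity H)
    (E : Fin (t+1) → Finset (Finset α)) (hE0 : E 0 = M.edges)
    (hsub : ∀ i, E i ⊆ M.edges) :
    (n:ℝ) ^ (Fintype.card α + (t+1))
        * edgeDensity H ^ (∑ i : Fin (t+1), degNear M (edgeSupport (E i)))
      ≤ (homCount (linkCone E (fun i f hf => M.uniform f (hsub i hf))) H : ℝ) := by
  classical
  have hnR : (0:ℝ) < (n:ℝ) := by exact_mod_cast hn
  set p := edgeDensity H with hpdef
  rcases Finset.eq_empty_or_nonempty M.edges with hMe | hMne
  · -- M has no edges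
    have hEi : ∀ i, E i = ∅ := fun i => Finset.subset_empty.1 (hMe ▸ hsub i)
    have hD : ∀ i : Fin (t+1), degNear M (edgeSupport (E i)) = 0 := fun i => by
      rw [hEi i]; exact degNear_empty M
    rw [Finset.sum_congr rfl fun i _ => hD i, Finset.sum_const_zero, pow_zero, mul_one]
    rw [homCount_linkCone]
    have hnb : ∀ φ : α → Fin n, ∏ i : Fin (t+1), nb H (E i) φ = n ^ (t+1) := by
      intro φ
      calc ∏ i : Fin (t+1), nb H (E i) φ
          = ∏ _i : Fin (t+1), n :=
            Finset.prod_congr rfl fun i _ => by rw [hEi i]; exact nb_empty H φ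
        _ = n ^ (t+1) := by rw [Finset.prod_const, Finset.card_univ, Fintype.card_fin]
    rw [Finset.sum_congr rfl fun φ _ => hnb φ, Finset.sum_const, Finset.card_univ,
      Fintype.card_fun, Fintype.card_fin, smul_eq_mul]
    rw [← pow_add]
    push_cast
    rfl
  · -- main case
    set e := M.edges.card with he
    have hepos : 0 < e := Finset.card_pos.2 hMne
    have heR : (0:ℝ) < (e:ℝ) := by exact_mod_cast hepos
    set S := Sf H M with hSdef
    have hS : 0 < S := S_pos H M hn hM hMne hp
    have hcM_of_u : ∀ b : Fin n, uf H M b ≠ 0 → 0 < cnt H M.edges b := by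
      intro b hu
      by_contra hc
      have h0 : cnt H M.edges b = 0 := by omega
      refine hu (uf_eq_zero H M ?_ hMne)
      rw [Wf, h0]; simp
    have hsum_u : ∑ b, uf H M b / S = 1 := by
      rw [← Finset.sum_div]
      rw [show (∑ b, uf H M b) = S from rfl, div_self hS.ne']
    -- the weight and target functions on pairs
    set ρ : Fin n → (α → Fin n) → ℝ := fun b φ =>
      (uf H M b / S) * (if ok H M.edges b φ then ((cnt H M.edges b : ℝ))⁻¹ else 0) with hρ
    set tt : Fin n → (α → Fin n) → ℝ := fun b φ =>
      (if ok H M.edges b φ then (1:ℝ) else 0)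
        * ∏ i : Fin t, (nb H (E i.succ) φ : ℝ) with htt
    have hρ0 : ∀ b φ, 0 ≤ ρ b φ := by
      intro b φ
      apply mul_nonneg (div_nonneg (uf_nonneg H M b) hS.le)
      split_ifs
      · positivity
      · exact le_refl 0
    have hρin : ∀ b, ∑ φ : α → Fin n, ρ b φ = uf H M b / S := by
      intro b
      rw [hρ]
      dsimp only
      rw [← Finset.mul_sum, sum_ite_ok H M.edges b (((cnt H M.edges b : ℝ))⁻¹)]
      rcases eq_or_ne (uf H M b) 0 with hu | hu
      · rw [hu]; simp
      · rw [mul_inv_cancel₀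
          (by exact_mod_cast (hcM_of_u b hu).ne' : (cnt H M.edges b:ℝ) ≠ 0), mul_one]
    have hnb_pos : ∀ (b : Fin n) (φ : α → Fin n), ok H M.edges b φ →
        ∀ A' : Finset (Finset α), A' ⊆ M.edges → 1 ≤ nb H A' φ := by
      intro b φ hok A' hA'
      refine Finset.card_pos.2 ⟨b, Finset.mem_filter.2 ⟨Finset.mem_univ b, ?_⟩⟩
      exact fun f hf => hok f (hA' hf)
    have htt0 : ∀ b φ, 0 ≤ tt b φ := by
      intro b φ
      rw [htt]
      dsimp only
      apply mul_nonneg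
      · split_ifs <;> norm_num
      · exact Finset.prod_nonneg fun i _ => Nat.cast_nonneg _
    have hok_of_ρ : ∀ b φ, 0 < ρ b φ → ok H M.edges b φ := by
      intro b φ hz
      by_contra hc
      rw [hρ] at hz
      dsimp only at hz
      rw [if_neg hc, mul_zero] at hz
      exact lt_irrefl 0 hz
    have hu_of_ρ : ∀ b φ, 0 < ρ b φ → 0 < uf H M b := by
      intro b φ hz
      rcases eq_or_lt_of_le (uf_nonneg H M b) with hu | hu
      · exfalso
        rw [hρ] at hz
        dsimp only at hz
        rw [← hu, zero_div, zero_mul] at hz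
        exact lt_irrefl 0 hz
      · exact hu
    have htt1 : ∀ b φ, 0 < ρ b φ → 1 ≤ tt b φ := by
      intro b φ hz
      have hok := hok_of_ρ b φ hz
      rw [htt]
      dsimp only
      rw [if_pos hok, one_mul]
      have hposn : (0:ℕ) < ∏ i : Fin t, nb H (E i.succ) φ :=
        Finset.prod_pos fun i _ => hnb_pos b φ hok (E i.succ) (hsub i.succ)
      calc (1:ℝ) ≤ ((∏ i : Fin t, nb H (E i.succ) φ : ℕ) : ℝ) := by exact_mod_cast hposn
        _ = ∏ i : Fin t, (nb H (E i.succ) φ : ℝ) := by push_cast; rfl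
    have hρsum : ∑ x : Fin n × (α → Fin n), ρ x.1 x.2 = 1 := by
      rw [Fintype.sum_prod_type, Finset.sum_congr rfl fun b _ => hρin b]
      exact hsum_u
    have hmaster := gibbs_exp (univ : Finset (Fin n × (α → Fin n)))
      (fun x => ρ x.1 x.2) (fun x => tt x.1 x.2)
      (fun x _ => hρ0 x.1 x.2) hρsum (fun x _ => htt0 x.1 x.2)
      (fun x _ hx => lt_of_lt_of_le zero_lt_one (htt1 x.1 x.2 hx))
    have hsumtt : ∑ x : Fin n × (α → Fin n), tt x.1 x.2
        = (homCount (linkCone E (fun i f hf => M.uniform f (hsub i hf))) H : ℝ) := by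
      rw [Fintype.sum_prod_type, Finset.sum_comm, homCount_linkCone]
      push_cast
      refine Finset.sum_congr rfl fun φ _ => ?_
      rw [Fin.prod_univ_succ]
      have hb0 : ∑ b : Fin n, (if ok H M.edges b φ then (1:ℝ) else 0) = (nb H (E 0) φ : ℝ) := by
        rw [hE0, nb, Finset.card_filter]
        push_cast
        rfl
      rw [htt]
      dsimp only
      rw [← Finset.sum_mul, hb0]
    -- pointwise expansion of the log term
    have hpoint : ∀ b φ, ρ b φ * Real.log (tt b φ / ρ b φ)
        = ρ b φ * ((Real.log S + (1 - (e:ℝ)⁻¹) * Real.log (Wf H M b)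
            + (Fintype.card α : ℝ) * Real.log n)
          + ∑ i : Fin t, Real.log (nb H (E i.succ) φ)) := by
      intro b φ
      rcases eq_or_lt_of_le (hρ0 b φ) with hz | hz
      · rw [← hz, zero_mul, zero_mul]
      · have hok := hok_of_ρ b φ hz
        have hu := hu_of_ρ b φ hz
        have hcM := hcM_of_u b hu.ne'
        have hcMr : (0:ℝ) < (cnt H M.edges b : ℝ) := by exact_mod_cast hcM
        have hW : 0 < Wf H M b := by rw [Wf]; positivity
        have hnb1 : ∀ i : Fin t, (0:ℝ) < (nb H (E i.succ) φ : ℝ) := by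
          intro i
          exact_mod_cast hnb_pos b φ hok (E i.succ) (hsub i.succ)
        have hprodpos : (0:ℝ) < ∏ i : Fin t, (nb H (E i.succ) φ : ℝ) :=
          Finset.prod_pos fun i _ => hnb1 i
        congr 1
        rw [htt, hρ]
        dsimp only
        rw [if_pos hok, if_pos hok, one_mul]
        rw [Real.log_div hprodpos.ne'
          (mul_pos (div_pos hu hS) (inv_pos.2 hcMr)).ne']
        rw [Real.log_prod (fun i _ => (hnb1 i).ne')]
        rw [Real.log_mul (div_pos hu hS).ne' (inv_pos.2 hcMr).ne', Real.log_inv]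
        rw [Real.log_div hu.ne' hS.ne']
        have hlogu : Real.log (uf H M b) = ((e:ℝ))⁻¹ * Real.log (Wf H M b) := by
          rw [uf, Real.log_rpow hW, ← he]
        have hlogcM : Real.log ((cnt H M.edges b : ℕ) : ℝ)
            = Real.log (Wf H M b) + (Fintype.card α : ℝ) * Real.log n := by
          rw [Wf, Real.log_div hcMr.ne' (by positivity), Real.log_pow]
          ring
        rw [hlogu, hlogcM]
        ring
    -- the base (0-th apex) bound
    have hlogS : Real.log n + Real.log p ≤ Real.log S := by
      have h1 : (n:ℝ) * p ≤ S := S_lb H M hn hM hMne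
      have h2 : Real.log ((n:ℝ) * p) ≤ Real.log S := Real.log_le_log (by positivity) h1
      rwa [Real.log_mul hnR.ne' hp.ne'] at h2
    have hLam : (e:ℝ) * Real.log p ≤ Lf H M := by
      have h1 := Lam_lb H M hn hM hMne hp
      rw [← he] at h1
      have h2 : Real.log p ≤ Real.log S - Real.log n := by linarith
      calc (e:ℝ) * Real.log p ≤ (e:ℝ) * (Real.log S - Real.log n) :=
          mul_le_mul_of_nonneg_left h2 heR.le
        _ ≤ Lf H M := h1
    have hT0 : (Fintype.card α : ℝ) * Real.log n + Real.log n + (e:ℝ) * Real.log p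
        ≤ ∑ b, ∑ φ : α → Fin n, ρ b φ * (Real.log S
            + (1 - (e:ℝ)⁻¹) * Real.log (Wf H M b) + (Fintype.card α : ℝ) * Real.log n) := by
      have hbeq : ∀ b, ∑ φ : α → Fin n, ρ b φ * (Real.log S
            + (1 - (e:ℝ)⁻¹) * Real.log (Wf H M b) + (Fintype.card α : ℝ) * Real.log n)
          = (uf H M b / S) * (Real.log S
            + (1 - (e:ℝ)⁻¹) * Real.log (Wf H M b) + (Fintype.card α : ℝ) * Real.log n) := by
        intro b
        rw [← Finset.sum_mul, hρin b]
      rw [Finset.sum_congr rfl fun b _ => hbeq b]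
      have hexpand : ∑ b, (uf H M b / S) * (Real.log S
            + (1 - (e:ℝ)⁻¹) * Real.log (Wf H M b) + (Fintype.card α : ℝ) * Real.log n)
          = Real.log S + (1 - (e:ℝ)⁻¹) * Lf H M + (Fintype.card α : ℝ) * Real.log n := by
        have hLf : Lf H M = ∑ b, (uf H M b / S) * Real.log (Wf H M b) := rfl
        have hterm3 : ∀ b : Fin n, (uf H M b / S) * (Real.log S
              + (1 - (e:ℝ)⁻¹) * Real.log (Wf H M b) + (Fintype.card α : ℝ) * Real.log n)
            = (uf H M b / S) * Real.log S
              + (1 - (e:ℝ)⁻¹) * ((uf H M b / S) * Real.log (Wf H M b))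
              + (uf H M b / S) * ((Fintype.card α : ℝ) * Real.log n) := fun b => by ring
        rw [Finset.sum_congr rfl fun b _ => hterm3 b]
        rw [Finset.sum_add_distrib, Finset.sum_add_distrib, ← Finset.sum_mul,
          ← Finset.mul_sum, ← Finset.sum_mul, hsum_u, one_mul, one_mul, hLf]
      rw [hexpand]
      have hc1 : 0 ≤ 1 - (e:ℝ)⁻¹ := by
        rw [sub_nonneg, inv_le_one_iff₀]
        right
        exact_mod_cast hepos
      have h4 : (1 - (e:ℝ)⁻¹) * ((e:ℝ) * Real.log p) ≤ (1 - (e:ℝ)⁻¹) * Lf H M :=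
        mul_le_mul_of_nonneg_left hLam hc1
      have h5 : (1 - (e:ℝ)⁻¹) * ((e:ℝ) * Real.log p) = ((e:ℝ) - 1) * Real.log p := by
        field_simp
      nlinarith [hlogS, h4, h5]
    -- per-apex bounds
    have hTi : ∀ i : Fin t,
        Real.log n + (degNear M (edgeSupport (E i.succ)) : ℝ) * Real.log p
          ≤ ∑ b, ∑ φ : α → Fin n, ρ b φ * Real.log (nb H (E i.succ) φ) := by
      intro i
      rcases Finset.eq_empty_or_nonempty (E i.succ) with hAe | hAne
      · have hdeg0 : (degNear M (edgeSupport (E i.succ)) : ℝ) = 0 := by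
          rw [hAe, degNear_empty M, Nat.cast_zero]
        rw [hdeg0, zero_mul, add_zero]
        have heq1 : ∀ b, ∑ φ : α → Fin n, ρ b φ * Real.log (nb H (E i.succ) φ)
            = (uf H M b / S) * Real.log n := by
          intro b
          have hstep : ∀ φ : α → Fin n, ρ b φ * Real.log (nb H (E i.succ) φ)
              = ρ b φ * Real.log (n:ℝ) := by
            intro φ
            rw [hAe, nb_empty H φ]
          rw [Finset.sum_congr rfl fun φ _ => hstep φ, ← Finset.sum_mul, hρin b]
        rw [Finset.sum_congr rfl fun b _ => heq1 b, ← Finset.sum_mul, hsum_u, one_mul]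
      · have hap := apex_bound H M hn hM hMne hp hk (E i.succ) (hsub i.succ) hAne
        rw [← hpdef, ← hSdef] at hap
        refine le_trans hap (le_of_eq ?_)
        refine Finset.sum_congr rfl fun b _ => ?_
        set V := edgeSupport (E i.succ) with hVdef
        have hAV : ∀ f ∈ E i.succ, f ⊆ V := by
          intro f hf x hx
          exact Finset.mem_biUnion.2 ⟨f, hf, hx⟩
        rw [← Finset.sum_fiberwise_of_maps_to (g := res V) (t := univ)
          (fun φ _ => Finset.mem_univ _)
          (f := fun φ => ρ b φ * Real.log (nb H (E i.succ) φ))]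
        refine Finset.sum_congr rfl fun ψ _ => ?_
        have hfix : ∀ φ ∈ univ.filter (fun φ : α → Fin n => res V φ = ψ),
            ρ b φ * Real.log (nb H (E i.succ) φ)
              = ρ b φ * Real.log (nb H (E i.succ) (ext hn V ψ)) := by
          intro φ hφ
          rw [nb_eq_of_res H hn hAV (Finset.mem_filter.1 hφ).2]
        rw [Finset.sum_congr rfl hfix, ← Finset.sum_mul]
        congr 1
        rw [hρ]
        dsimp only
        rw [← Finset.mul_sum]
        have hinner2 : ∑ φ ∈ univ.filter (fun φ : α → Fin n => res V φ = ψ),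
            (if ok H M.edges b φ then ((cnt H M.edges b : ℝ))⁻¹ else 0)
              = (Yc H M.edges b V ψ : ℝ) * ((cnt H M.edges b : ℝ))⁻¹ := by
          rw [Finset.sum_ite, Finset.sum_const, Finset.sum_const_zero, add_zero, nsmul_eq_mul]
          congr 2
          rw [Finset.filter_filter, Yc]
          congr 1
          exact Finset.filter_congr fun φ _ => and_comm
        rw [hinner2]
        ring
    -- assembling the total bound
    have hbound : ((Fintype.card α + (t+1) : ℕ) : ℝ) * Real.log n
          + ((∑ i : Fin (t+1), degNear M (edgeSupport (E i)) : ℕ) : ℝ) * Real.log p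
        ≤ ∑ x : Fin n × (α → Fin n), ρ x.1 x.2 * Real.log (tt x.1 x.2 / ρ x.1 x.2) := by
      rw [Fintype.sum_prod_type]
      rw [Finset.sum_congr rfl fun b _ =>
        Finset.sum_congr rfl fun φ _ => hpoint b φ]
      have hsplit2 : ∀ (b : Fin n) (φ : α → Fin n),
          ρ b φ * ((Real.log S + (1 - (e:ℝ)⁻¹) * Real.log (Wf H M b)
            + (Fintype.card α : ℝ) * Real.log n)
          + ∑ i : Fin t, Real.log (nb H (E i.succ) φ))
          = ρ b φ * (Real.log S + (1 - (e:ℝ)⁻¹) * Real.log (Wf H M b)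
            + (Fintype.card α : ℝ) * Real.log n)
          + ∑ i : Fin t, ρ b φ * Real.log (nb H (E i.succ) φ) := by
        intro b φ
        rw [mul_add, Finset.mul_sum]
      rw [Finset.sum_congr rfl fun b _ => Finset.sum_congr rfl fun φ _ => hsplit2 b φ]
      rw [Finset.sum_congr rfl fun b _ => Finset.sum_add_distrib, Finset.sum_add_distrib]
      have hswap3 : ∑ b, ∑ φ : α → Fin n, ∑ i : Fin t, ρ b φ * Real.log (nb H (E i.succ) φ)
          = ∑ i : Fin t, ∑ b, ∑ φ : α → Fin n, ρ b φ * Real.log (nb H (E i.succ) φ) := by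
        have h1 : ∀ b : Fin n, ∑ φ : α → Fin n, ∑ i : Fin t,
              ρ b φ * Real.log (nb H (E i.succ) φ)
            = ∑ i : Fin t, ∑ φ : α → Fin n, ρ b φ * Real.log (nb H (E i.succ) φ) :=
          fun b => Finset.sum_comm
        rw [Finset.sum_congr rfl fun b _ => h1 b]
        exact Finset.sum_comm
      rw [hswap3]
      have hsum_ti : ∑ i : Fin t, (Real.log n
            + (degNear M (edgeSupport (E i.succ)) : ℝ) * Real.log p)
          ≤ ∑ i : Fin t, ∑ b, ∑ φ : α → Fin n, ρ b φ * Real.log (nb H (E i.succ) φ) :=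
        Finset.sum_le_sum fun i _ => hTi i
      have hD : ((∑ i : Fin (t+1), degNear M (edgeSupport (E i)) : ℕ) : ℝ)
          = (e:ℝ) + ∑ i : Fin t, (degNear M (edgeSupport (E i.succ)) : ℝ) := by
        rw [Fin.sum_univ_succ]
        push_cast
        congr 1
        rw [hE0, degNear_support_self M hk, he]
      have hsplit4 : ∑ i : Fin t, (Real.log n
            + (degNear M (edgeSupport (E i.succ)) : ℝ) * Real.log p)
          = (t:ℝ) * Real.log n
            + (∑ i : Fin t, (degNear M (edgeSupport (E i.succ)) : ℝ)) * Real.log p := by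
        rw [Finset.sum_add_distrib, Finset.sum_const, Finset.card_univ, Fintype.card_fin,
          nsmul_eq_mul, Finset.sum_mul]
      have hces : ((Fintype.card α + (t+1) : ℕ) : ℝ) = (Fintype.card α : ℝ) + (t:ℝ) + 1 := by
        push_cast
        ring
      rw [hces, hD]
      calc ((Fintype.card α : ℝ) + (t:ℝ) + 1) * Real.log n
            + ((e:ℝ) + ∑ i : Fin t, (degNear M (edgeSupport (E i.succ)) : ℝ)) * Real.log p
          = ((Fintype.card α : ℝ) * Real.log n + Real.log n + (e:ℝ) * Real.log p)
            + ((t:ℝ) * Real.log n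
              + (∑ i : Fin t, (degNear M (edgeSupport (E i.succ)) : ℝ)) * Real.log p) := by
            ring
        _ ≤ _ := by
            rw [← hsplit4]
            exact add_le_add hT0 hsum_ti
    -- conclude by exponentiating
    have hpos1 : (0:ℝ) < (n:ℝ) ^ (Fintype.card α + (t+1)) := by positivity
    have hpos2 : (0:ℝ) < p ^ (∑ i : Fin (t+1), degNear M (edgeSupport (E i))) := by positivity
    calc (n:ℝ) ^ (Fintype.card α + (t+1))
          * p ^ (∑ i : Fin (t+1), degNear M (edgeSupport (E i)))
        = Real.exp (((Fintype.card α + (t+1) : ℕ) : ℝ) * Real.log n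
            + ((∑ i : Fin (t+1), degNear M (edgeSupport (E i)) : ℕ) : ℝ) * Real.log p) := by
          rw [← Real.log_pow, ← Real.log_pow, Real.exp_add, Real.exp_log hpos1,
            Real.exp_log hpos2]
      _ ≤ Real.exp (∑ x : Fin n × (α → Fin n), ρ x.1 x.2 * Real.log (tt x.1 x.2 / ρ x.1 x.2)) :=
          Real.exp_le_exp.2 hbound
      _ ≤ ∑ x : Fin n × (α → Fin n), tt x.1 x.2 := hmaster
      _ = _ := hsumtt

end Counting

end Stmt6Aux

open Stmt6Aux in
/-- If `M` is a dominating `(r−1)`-graph and the `r`-graph `F` has link profile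
`(E 0, …, E t)` with `E 0 = M` and each `E i` a sub-hypergraph of `M`, then
`s(F) ≤ Σᵢ d_M(V(L_F(vᵢ)))`. -/

theorem stmt6 {k : ℕ} (hk : 1 ≤ k) {t : ℕ} {α : Type} [Fintype α] [DecidableEq α]
    (M : HGraph k α) (hM : IsDominating M)
    (E : Fin (t + 1) → Finset (Finset α)) (hE0 : E 0 = M.edges)
    (hsub : ∀ i, E i ⊆ M.edges) :
    sidorenkoExp (linkCone E (fun i f hf => M.uniform f (hsub i hf))) ≤
      ∑ i : Fin (t + 1), (degNear M (edgeSupport (E i)) : ℝ) := by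
  classical
  refine Real.sSup_le ?_ (Finset.sum_nonneg fun i _ => Nat.cast_nonneg _)
  rintro s ⟨hs0, n, H, heq, hpos⟩
  rcases Nat.eq_zero_or_pos n with rfl | hn
  · exfalso
    have hv : 0 < Fintype.card (α ⊕ Fin (t+1)) := by
      rw [Fintype.card_sum, Fintype.card_fin]
      omega
    have h0 : homDensity (linkCone E (fun i f hf => M.uniform f (hsub i hf))) H = 0 := by
      rw [homDensity, Fintype.card_fin]
      rw [Nat.cast_zero, zero_pow hv.ne', div_zero]
    rw [h0] at heq
    rw [← heq] at hpos
    exact lt_irrefl 0 hpos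
  set p := edgeDensity H with hpdef
  have hp0 : 0 ≤ p := by
    rw [hpdef, edgeDensity, homDensity]
    positivity
  rcases eq_or_lt_of_le hp0 with hp | hp
  · have hs : s = 0 := by
      by_contra hs
      rw [← hp, Real.zero_rpow hs] at hpos
      exact lt_irrefl 0 hpos
    rw [hs]
    exact Finset.sum_nonneg fun i _ => Nat.cast_nonneg _
  · -- 0 < p < 1
    have hp1 : p < 1 := by
      have hlt : homCount (KEdge (k+1)) H < n ^ (k+1) := by
        have hne : homFinset (KEdge (k+1)) H ≠ univ := by
          intro hcontr
          have h1 : (fun _ : Fin (k+1) => (⟨0, hn⟩ : Fin n)) ∈ homFinset (KEdge (k+1)) H := by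
            rw [hcontr]; exact Finset.mem_univ _
          rw [homFinset, Finset.mem_filter] at h1
          have h2 := h1.2 Finset.univ (by simp [KEdge])
          have h3 := H.uniform _ h2
          rw [Finset.image_const Finset.univ_nonempty] at h3
          rw [Finset.card_singleton] at h3
          omega
        calc homCount (KEdge (k+1)) H < (univ : Finset (Fin (k+1) → Fin n)).card :=
            Finset.card_lt_card (Finset.ssubset_univ_iff.2 hne)
          _ = n ^ (k+1) := by
              rw [Finset.card_univ, Fintype.card_fun, Fintype.card_fin, Fintype.card_fin]
      rw [hpdef, edgeDensity, homDensity, Fintype.card_fin, Fintype.card_fin]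
      rw [div_lt_one (by positivity)]
      exact_mod_cast hlt
    have hmain := main_count H M hk hn hM (hpdef ▸ hp) E hE0 hsub
    set D := ∑ i : Fin (t+1), degNear M (edgeSupport (E i)) with hD
    have hdens : p ^ (D:ℕ) ≤ homDensity (linkCone E (fun i f hf => M.uniform f (hsub i hf))) H := by
      rw [homDensity, Fintype.card_fin, Fintype.card_sum, Fintype.card_fin]
      rw [le_div_iff₀ (by positivity : (0:ℝ) < (n:ℝ) ^ (Fintype.card α + (t+1)))]
      calc p ^ (D:ℕ) * (n:ℝ) ^ (Fintype.card α + (t+1))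
          = (n:ℝ) ^ (Fintype.card α + (t+1)) * p ^ (D:ℕ) := by ring
        _ ≤ _ := hmain
    rw [heq] at hdens
    have hDrpow : p ^ ((D:ℕ):ℝ) ≤ p ^ s := by
      rw [Real.rpow_natCast]
      exact hdens
    have hsD : s ≤ ((D:ℕ):ℝ) :=
      (Real.rpow_le_rpow_left_iff_of_base_lt_one hp hp1).1 hDrpow
    refine le_trans hsD (le_of_eq ?_)
    rw [hD]
    push_cast
    rfl
end
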